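/- arXiv:1209.5104 — 2 statements merged into one kernel-verified Lean document; each statement's English description precedes it below -/
import Mathlib

section
/- Let K be a field, I ⊆ K[x_1,…,x_n] an ideal, and ω ∈ (ℝ_{>0})^n a strictly positive vector. Then In_ω I is a monomial ideal (i.e. generated by a set of monomials) if and only if the Gröbner cone C_ω(I) has maximal dimension n, i.e. the set {u ∈ (ℝ_{≥0})^n : In_u I = In_ω I} has nonempty interior in ℝ^n. -/
open MvPolynomial Matrix

open Classical in
/-- The `w`-initial part of a multivariate polynomial: the sum of the terms whose
exponents have minimal `w`-weight among the exponents of `f`. -/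
noncomputable def initialPart {n : ℕ} {K : Type*} [CommSemiring K] (w : Fin n → ℝ)
    (f : MvPolynomial (Fin n) K) : MvPolynomial (Fin n) K :=
  ∑ μ ∈ f.support,
    if ∀ ν ∈ f.support, ∑ i, w i * (μ i : ℝ) ≤ ∑ i, w i * (ν i : ℝ)
    then monomial μ (f.coeff μ) else 0

/-- The `w`-initial ideal of an ideal `I`: the ideal generated by the `w`-initial
parts of the nonzero elements of `I`. -/
noncomputable def initialIdeal {n : ℕ} {K : Type*} [CommSemiring K] (w : Fin n → ℝ)
    (I : Ideal (MvPolynomial (Fin n) K)) : Ideal (MvPolynomial (Fin n) K) :=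
  Ideal.span {g | ∃ f ∈ I, f ≠ 0 ∧ g = initialPart w f}

/-- The Gröbner cone of `I` at `w`: the closure in `ℝ^n` of the set of nonnegative
vectors `u` with `In_u I = In_w I`. -/
noncomputable def groebnerCone {n : ℕ} {K : Type*} [CommSemiring K] (w : Fin n → ℝ)
    (I : Ideal (MvPolynomial (Fin n) K)) : Set (Fin n → ℝ) :=
  closure {u : Fin n → ℝ | (∀ i, 0 ≤ u i) ∧ initialIdeal u I = initialIdeal w I}

section Aux
variable {n : ℕ} {K : Type*} [Field K]

/-- weight of an exponent vector -/
noncomputable def wt (u : Fin n → ℝ) (μ : Fin n →₀ ℕ) : ℝ := ∑ i, u i * (μ i : ℝ)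

lemma wt_add (u : Fin n → ℝ) (μ ν : Fin n →₀ ℕ) : wt u (μ + ν) = wt u μ + wt u ν := by
  simp [wt, mul_add, Finset.sum_add_distrib]

lemma wt_nonneg {u : Fin n → ℝ} (hu : ∀ i, 0 ≤ u i) (μ : Fin n →₀ ℕ) : 0 ≤ wt u μ :=
  Finset.sum_nonneg fun i _ => mul_nonneg (hu i) (by positivity)

open Classical in
/-- the weight-`c` isobaric component of `f` -/
noncomputable def proj (u : Fin n → ℝ) (c : ℝ) (f : MvPolynomial (Fin n) K) :
    MvPolynomial (Fin n) K :=
  ∑ μ ∈ f.support, if wt u μ = c then monomial μ (f.coeff μ) else 0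

open Classical in
lemma coeff_sum_filter (f : MvPolynomial (Fin n) K) (p : (Fin n →₀ ℕ) → Prop) [DecidablePred p] (τ : Fin n →₀ ℕ) :
    (∑ μ ∈ f.support, if p μ then monomial μ (f.coeff μ) else 0).coeff τ
      = if p τ then f.coeff τ else 0 := by
  classical
  rw [MvPolynomial.coeff_sum]
  have h1 : ∀ μ ∈ f.support,
      (if p μ then monomial μ (f.coeff μ) else 0).coeff τ
        = if μ = τ then (if p τ then f.coeff τ else 0) else 0 := by
    intro μ _
    rcases eq_or_ne μ τ with h|h
    · subst h
      split_ifs <;> simp_all [coeff_monomial]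
    · split_ifs <;> simp_all [coeff_monomial, h]
  rw [Finset.sum_congr rfl h1, Finset.sum_ite_eq' f.support τ]
  by_cases hτ : τ ∈ f.support
  · simp [hτ]
  · simp only [hτ, if_false]
    rw [MvPolynomial.notMem_support_iff.mp hτ]
    simp

open Classical in
lemma coeff_initialPart (u : Fin n → ℝ) (f : MvPolynomial (Fin n) K) (τ : Fin n →₀ ℕ) :
    (initialPart u f).coeff τ
      = if ∀ ν ∈ f.support, wt u τ ≤ wt u ν then f.coeff τ else 0 := by
  have : initialPart u f
      = ∑ μ ∈ f.support, if (∀ ν ∈ f.support, wt u μ ≤ wt u ν)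
          then monomial μ (f.coeff μ) else 0 := by
    rw [initialPart]
    exact Finset.sum_congr rfl fun μ _ => by congr 1
  rw [this]
  exact coeff_sum_filter f (fun μ => ∀ ν ∈ f.support, wt u μ ≤ wt u ν) τ

open Classical in
lemma coeff_proj (u : Fin n → ℝ) (c : ℝ) (f : MvPolynomial (Fin n) K) (τ : Fin n →₀ ℕ) :
    (proj u c f).coeff τ = if wt u τ = c then f.coeff τ else 0 := by
  rw [proj, coeff_sum_filter]

lemma mem_support_initialPart {u : Fin n → ℝ} {f : MvPolynomial (Fin n) K} {τ : Fin n →₀ ℕ} :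
    τ ∈ (initialPart u f).support ↔ τ ∈ f.support ∧ ∀ ν ∈ f.support, wt u τ ≤ wt u ν := by
  classical
  constructor
  · intro hτ
    have h1 : (initialPart u f).coeff τ ≠ 0 := MvPolynomial.mem_support_iff.mp hτ
    rw [coeff_initialPart] at h1
    by_cases hc : ∀ ν ∈ f.support, wt u τ ≤ wt u ν
    · rw [if_pos hc] at h1; exact ⟨MvPolynomial.mem_support_iff.mpr h1, hc⟩
    · rw [if_neg hc] at h1; exact absurd rfl h1
  · rintro ⟨h1, h2⟩
    rw [MvPolynomial.mem_support_iff, coeff_initialPart, if_pos h2]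
    exact MvPolynomial.mem_support_iff.mp h1

lemma mem_support_proj {u : Fin n → ℝ} {c : ℝ} {f : MvPolynomial (Fin n) K} {τ : Fin n →₀ ℕ} :
    τ ∈ (proj u c f).support ↔ τ ∈ f.support ∧ wt u τ = c := by
  classical
  constructor
  · intro hτ
    have h1 : (proj u c f).coeff τ ≠ 0 := MvPolynomial.mem_support_iff.mp hτ
    rw [coeff_proj] at h1
    by_cases hc : wt u τ = c
    · rw [if_pos hc] at h1; exact ⟨MvPolynomial.mem_support_iff.mpr h1, hc⟩
    · rw [if_neg hc] at h1; exact absurd rfl h1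
  · rintro ⟨h1, h2⟩
    rw [MvPolynomial.mem_support_iff, coeff_proj, if_pos h2]
    exact MvPolynomial.mem_support_iff.mp h1

lemma coeff_initialPart_of_mem {u : Fin n → ℝ} {f : MvPolynomial (Fin n) K} {τ : Fin n →₀ ℕ}
    (h : τ ∈ (initialPart u f).support) : (initialPart u f).coeff τ = f.coeff τ := by
  classical
  rw [coeff_initialPart, if_pos (mem_support_initialPart.mp h).2]

lemma initialPart_ne_zero {u : Fin n → ℝ} {f : MvPolynomial (Fin n) K} (hf : f ≠ 0) :
    initialPart u f ≠ 0 := by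
  obtain ⟨τ, hτ, hmin⟩ := f.support.exists_min_image (wt u)
    (MvPolynomial.support_nonempty.mpr hf)
  intro h0
  have : τ ∈ (initialPart u f).support := mem_support_initialPart.mpr ⟨hτ, hmin⟩
  rw [h0] at this; simp at this

lemma support_initialPart_subset (u : Fin n → ℝ) (f : MvPolynomial (Fin n) K) :
    (initialPart u f).support ⊆ f.support := fun _ h => (mem_support_initialPart.mp h).1

lemma proj_zero (u : Fin n → ℝ) (c : ℝ) : proj u c (0 : MvPolynomial (Fin n) K) = 0 := by
  simp [proj]

lemma initialPart_eq_proj {u : Fin n → ℝ} {c : ℝ} {f : MvPolynomial (Fin n) K}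
    (hs : ∀ ν ∈ f.support, c ≤ wt u ν) (hex : ∃ μ ∈ f.support, wt u μ = c) :
    initialPart u f = proj u c f := by
  classical
  apply MvPolynomial.ext
  intro τ
  rw [coeff_initialPart, coeff_proj]
  obtain ⟨μ₀, hμ₀, hwμ₀⟩ := hex
  by_cases hτ : τ ∈ f.support
  · by_cases h1 : ∀ ν ∈ f.support, wt u τ ≤ wt u ν
    · rw [if_pos h1, if_pos (le_antisymm (hwμ₀ ▸ h1 μ₀ hμ₀) (hs τ hτ))]
    · rw [if_neg h1, if_neg]
      intro he
      exact h1 fun ν hν => he ▸ hs ν hν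
  · rw [MvPolynomial.notMem_support_iff.mp hτ]
    split_ifs <;> rfl

lemma ne_zero_of_proj_ne_zero {u : Fin n → ℝ} {c : ℝ} {f : MvPolynomial (Fin n) K}
    (h : proj u c f ≠ 0) : f ≠ 0 := by
  intro h0; rw [h0, proj_zero] at h; exact h rfl

lemma initialPart_eq_proj_of_ne_zero {u : Fin n → ℝ} {c : ℝ} {f : MvPolynomial (Fin n) K}
    (hs : ∀ ν ∈ f.support, c ≤ wt u ν) (h : proj u c f ≠ 0) :
    initialPart u f = proj u c f := by
  apply initialPart_eq_proj hs
  obtain ⟨τ, hτ⟩ := MvPolynomial.support_nonempty.mpr h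
  obtain ⟨h1, h2⟩ := mem_support_proj.mp hτ
  exact ⟨τ, h1, h2⟩

lemma proj_eq_self {u : Fin n → ℝ} {c : ℝ} {f : MvPolynomial (Fin n) K}
    (h : ∀ μ ∈ f.support, wt u μ = c) : proj u c f = f := by
  classical
  apply MvPolynomial.ext
  intro τ
  rw [coeff_proj]
  by_cases hτ : τ ∈ f.support
  · rw [if_pos (h τ hτ)]
  · rw [MvPolynomial.notMem_support_iff.mp hτ]; split_ifs <;> rfl

lemma proj_eq_zero {u : Fin n → ℝ} {c : ℝ} {f : MvPolynomial (Fin n) K}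
    (h : ∀ μ ∈ f.support, wt u μ ≠ c) : proj u c f = 0 := by
  classical
  apply MvPolynomial.ext
  intro τ
  rw [coeff_proj]
  by_cases hτ : τ ∈ f.support
  · rw [if_neg (h τ hτ)]; rfl
  · rw [MvPolynomial.notMem_support_iff.mp hτ]; split_ifs <;> rfl

lemma proj_sub (u : Fin n → ℝ) (c : ℝ) (f g : MvPolynomial (Fin n) K) :
    proj u c (f - g) = proj u c f - proj u c g := by
  classical
  apply MvPolynomial.ext
  intro τ
  rw [MvPolynomial.coeff_sub, coeff_proj, coeff_proj, coeff_proj, MvPolynomial.coeff_sub]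
  split_ifs <;> simp

lemma proj_add (u : Fin n → ℝ) (c : ℝ) (f g : MvPolynomial (Fin n) K) :
    proj u c (f + g) = proj u c f + proj u c g := by
  classical
  apply MvPolynomial.ext
  intro τ
  rw [MvPolynomial.coeff_add, coeff_proj, coeff_proj, coeff_proj, MvPolynomial.coeff_add]
  split_ifs <;> simp

lemma wt_eq_of_mem_support_initialPart {u : Fin n → ℝ} {f : MvPolynomial (Fin n) K}
    {μ ν : Fin n →₀ ℕ} (hμ : μ ∈ (initialPart u f).support)
    (hν : ν ∈ (initialPart u f).support) : wt u μ = wt u ν := by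
  obtain ⟨hμ1, hμ2⟩ := mem_support_initialPart.mp hμ
  obtain ⟨hν1, hν2⟩ := mem_support_initialPart.mp hν
  exact le_antisymm (hμ2 ν hν1) (hν2 μ hμ1)

/-- decomposition of a polynomial into isobaric components -/
lemma sum_proj_eq (u : Fin n → ℝ) (f : MvPolynomial (Fin n) K) :
    ∑ c ∈ f.support.image (wt u), proj u c f = f := by
  classical
  apply MvPolynomial.ext
  intro τ
  rw [MvPolynomial.coeff_sum]
  simp_rw [coeff_proj]
  rw [Finset.sum_ite_eq (f.support.image (wt u)) (wt u τ) (fun _ => f.coeff τ)]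
  by_cases hτ : τ ∈ f.support
  · rw [if_pos (Finset.mem_image_of_mem (wt u) hτ)]
  · rw [MvPolynomial.notMem_support_iff.mp hτ]; split_ifs <;> rfl

lemma proj_mul_isobaric {u : Fin n → ℝ} {c c' : ℝ} {h g : MvPolynomial (Fin n) K}
    (hh : ∀ p ∈ h.support, wt u p = c') :
    proj u c (h * g) = h * proj u (c - c') g := by
  classical
  apply MvPolynomial.ext
  intro τ
  rw [coeff_proj, MvPolynomial.coeff_mul, MvPolynomial.coeff_mul]
  simp_rw [coeff_proj]
  by_cases hc : wt u τ = c
  · rw [if_pos hc]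
    apply Finset.sum_congr rfl
    rintro ⟨p, q⟩ hpq
    have hpq' : p + q = τ := Finset.HasAntidiagonal.mem_antidiagonal.mp hpq
    by_cases hp : h.coeff p = 0
    · simp [hp]
    · have hwp : wt u p = c' := hh p (MvPolynomial.mem_support_iff.mpr hp)
      have : wt u q = c - c' := by
        have := wt_add u p q
        rw [hpq', hc, hwp] at this
        linarith
      rw [if_pos this]
  · rw [if_neg hc]
    symm
    apply Finset.sum_eq_zero
    rintro ⟨p, q⟩ hpq
    have hpq' : p + q = τ := Finset.HasAntidiagonal.mem_antidiagonal.mp hpq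
    by_cases hp : h.coeff p = 0
    · simp [hp]
    · have hwp : wt u p = c' := hh p (MvPolynomial.mem_support_iff.mpr hp)
      rw [if_neg, mul_zero]
      intro hq
      apply hc
      have := wt_add u p q
      rw [hpq', hwp, hq] at this
      linarith

lemma initialPart_mul_isobaric {u : Fin n → ℝ} {c' : ℝ} {h f : MvPolynomial (Fin n) K}
    (hh : ∀ p ∈ h.support, wt u p = c') (hh0 : h ≠ 0) (hf : f ≠ 0) :
    initialPart u (h * f) = h * initialPart u f := by
  classical
  obtain ⟨μ₀, hμ₀, hmin⟩ := f.support.exists_min_image (wt u)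
    (MvPolynomial.support_nonempty.mpr hf)
  have hIf : initialPart u f = proj u (wt u μ₀) f :=
    initialPart_eq_proj (fun ν hν => hmin ν hν) ⟨μ₀, hμ₀, rfl⟩
  have hproj : proj u (c' + wt u μ₀) (h * f) = h * initialPart u f := by
    rw [proj_mul_isobaric hh, add_sub_cancel_left, ← hIf]
  have hne : h * initialPart u f ≠ 0 := mul_ne_zero hh0 (initialPart_ne_zero hf)
  have hs : ∀ τ ∈ (h * f).support, c' + wt u μ₀ ≤ wt u τ := by
    intro τ hτ
    have := MvPolynomial.support_mul h f hτ
    obtain ⟨p, hp, q, hq, hpq⟩ := Finset.mem_add.mp this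
    rw [← hpq, wt_add, hh p hp]
    exact add_le_add (le_refl c') (hmin q hq)
  rw [initialPart_eq_proj_of_ne_zero hs (hproj ▸ hne), hproj]

variable {I : Ideal (MvPolynomial (Fin n) K)}

lemma initialPart_mem_initialIdeal {u : Fin n → ℝ} {f : MvPolynomial (Fin n) K}
    (hfI : f ∈ I) (hf0 : f ≠ 0) : initialPart u f ∈ initialIdeal u I :=
  Ideal.subset_span ⟨f, hfI, hf0, rfl⟩

lemma add_initialForm {u : Fin n → ℝ} {c : ℝ} {y1 y2 : MvPolynomial (Fin n) K}
    (h1 : y1 = 0 ∨ ∃ f ∈ I, f ≠ 0 ∧ y1 = initialPart u f)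
    (h2 : y2 = 0 ∨ ∃ f ∈ I, f ≠ 0 ∧ y2 = initialPart u f)
    (hw1 : ∀ μ ∈ y1.support, wt u μ = c) (hw2 : ∀ μ ∈ y2.support, wt u μ = c) :
    y1 + y2 = 0 ∨ ∃ f ∈ I, f ≠ 0 ∧ y1 + y2 = initialPart u f := by
  classical
  rcases h1 with rfl | ⟨f1, hf1I, hf10, rfl⟩
  · rw [zero_add]; exact h2
  rcases h2 with rfl | ⟨f2, hf2I, hf20, rfl⟩
  · rw [add_zero]; right; exact ⟨f1, hf1I, hf10, rfl⟩
  by_cases hz : initialPart u f1 + initialPart u f2 = 0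
  · left; exact hz
  right
  obtain ⟨τ1, hτ1⟩ := MvPolynomial.support_nonempty.mpr (initialPart_ne_zero (u := u) hf10)
  obtain ⟨τ2, hτ2⟩ := MvPolynomial.support_nonempty.mpr (initialPart_ne_zero (u := u) hf20)
  have hs1 : ∀ ν ∈ f1.support, c ≤ wt u ν := by
    intro ν hν
    have := (mem_support_initialPart.mp hτ1).2 ν hν
    rw [hw1 τ1 hτ1] at this; exact this
  have hs2 : ∀ ν ∈ f2.support, c ≤ wt u ν := by
    intro ν hν
    have := (mem_support_initialPart.mp hτ2).2 ν hν
    rw [hw2 τ2 hτ2] at this; exact this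
  have hp1 : proj u c f1 = initialPart u f1 :=
    (initialPart_eq_proj hs1 ⟨τ1, (mem_support_initialPart.mp hτ1).1, hw1 τ1 hτ1⟩).symm
  have hp2 : proj u c f2 = initialPart u f2 :=
    (initialPart_eq_proj hs2 ⟨τ2, (mem_support_initialPart.mp hτ2).1, hw2 τ2 hτ2⟩).symm
  have hs : ∀ ν ∈ (f1 + f2).support, c ≤ wt u ν := by
    intro ν hν
    rcases Finset.mem_union.mp (MvPolynomial.support_add hν) with h | h
    · exact hs1 ν h
    · exact hs2 ν h
  have hproj : proj u c (f1 + f2) = initialPart u f1 + initialPart u f2 := by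
    rw [proj_add, hp1, hp2]
  refine ⟨f1 + f2, I.add_mem hf1I hf2I, ne_zero_of_proj_ne_zero (c := c) (u := u) ?_, ?_⟩
  · rw [hproj]; exact hz
  · rw [initialPart_eq_proj_of_ne_zero hs (by rw [hproj]; exact hz), hproj]

lemma sum_initialForm {u : Fin n → ℝ} {c : ℝ} {α : Type*} (s : Finset α)
    (F : α → MvPolynomial (Fin n) K)
    (hF : ∀ i ∈ s, F i = 0 ∨ ∃ f ∈ I, f ≠ 0 ∧ F i = initialPart u f)
    (hw : ∀ i ∈ s, ∀ μ ∈ (F i).support, wt u μ = c) :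
    (∑ i ∈ s, F i) = 0 ∨ ∃ f ∈ I, f ≠ 0 ∧ (∑ i ∈ s, F i) = initialPart u f := by
  classical
  induction s using Finset.cons_induction with
  | empty => left; simp
  | cons a s ha ih =>
    rw [Finset.sum_cons]
    have hwsum : ∀ μ ∈ (∑ i ∈ s, F i).support, wt u μ = c := by
      intro μ hμ
      have hc : (∑ i ∈ s, F i).coeff μ ≠ 0 := MvPolynomial.mem_support_iff.mp hμ
      rw [MvPolynomial.coeff_sum] at hc
      obtain ⟨i, hi, hci⟩ := Finset.exists_ne_zero_of_sum_ne_zero hc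
      exact hw i (Finset.mem_cons_of_mem hi) μ (MvPolynomial.mem_support_iff.mpr hci)
    exact add_initialForm (hF a (Finset.mem_cons_self a s))
      (ih (fun i hi => hF i (Finset.mem_cons_of_mem hi))
          (fun i hi => hw i (Finset.mem_cons_of_mem hi)))
      (hw a (Finset.mem_cons_self a s)) hwsum

/-- Every isobaric component of an element of the initial ideal is itself
the initial part of an element of `I` (or zero). -/
lemma proj_initialIdeal {u : Fin n → ℝ} {g : MvPolynomial (Fin n) K}
    (hg : g ∈ initialIdeal u I) (c : ℝ) :
    proj u c g = 0 ∨ ∃ f ∈ I, f ≠ 0 ∧ proj u c g = initialPart u f := by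
  classical
  revert c
  refine Submodule.span_induction
    (p := fun x _ => ∀ c, proj u c x = 0 ∨ ∃ f ∈ I, f ≠ 0 ∧ proj u c x = initialPart u f)
    ?_ ?_ ?_ ?_ hg
  · rintro x ⟨f, hfI, hf0, rfl⟩ c
    by_cases hex : ∃ τ ∈ (initialPart u f).support, wt u τ = c
    · obtain ⟨τ, hτ, hwt⟩ := hex
      right
      refine ⟨f, hfI, hf0, ?_⟩
      rw [proj_eq_self (fun μ hμ => by rw [wt_eq_of_mem_support_initialPart hμ hτ, hwt])]
    · left
      exact proj_eq_zero fun μ hμ hc => hex ⟨μ, hμ, hc⟩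
  · intro c; left; exact proj_zero u c
  · intro x y hx hy ihx ihy c
    rw [proj_add]
    exact add_initialForm (ihx c) (ihy c)
      (fun μ hμ => (mem_support_proj.mp hμ).2) (fun μ hμ => (mem_support_proj.mp hμ).2)
  · intro a x hx ih c
    rw [smul_eq_mul]
    have hdec : a * x = ∑ c' ∈ a.support.image (wt u), proj u c' a * x := by
      rw [← Finset.sum_mul, sum_proj_eq]
    rw [hdec]
    have hprojsum : proj u c (∑ c' ∈ a.support.image (wt u), proj u c' a * x)
        = ∑ c' ∈ a.support.image (wt u), proj u c (proj u c' a * x) := by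
      induction (a.support.image (wt u)) using Finset.cons_induction with
      | empty => simp [proj_zero]
      | cons b s hb ih2 => rw [Finset.sum_cons, Finset.sum_cons, proj_add, ih2]
    rw [hprojsum]
    apply sum_initialForm
    · intro c' _
      rw [proj_mul_isobaric (fun p hp => (mem_support_proj.mp hp).2)]
      by_cases hz : proj u c' a = 0
      · left; rw [hz, zero_mul]
      rcases ih (c - c') with h0 | ⟨f, hfI, hf0, hf⟩
      · left; rw [h0, mul_zero]
      · right
        refine ⟨proj u c' a * f, Ideal.mul_mem_left I _ hfI,
          mul_ne_zero hz hf0, ?_⟩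
        rw [hf, initialPart_mul_isobaric (fun p hp => (mem_support_proj.mp hp).2) hz hf0]
    · intro c' _ μ hμ
      exact (mem_support_proj.mp hμ).2

lemma wt_add_smul (u v : Fin n → ℝ) (ε : ℝ) (μ : Fin n →₀ ℕ) :
    wt (u + ε • v) μ = wt u μ + ε * wt v μ := by
  unfold wt
  rw [Finset.mul_sum, ← Finset.sum_add_distrib]
  apply Finset.sum_congr rfl
  intro i _
  simp only [Pi.add_apply, Pi.smul_apply, smul_eq_mul]
  ring

lemma initialPart_perturb (u v : Fin n → ℝ) {f : MvPolynomial (Fin n) K} (hf : f ≠ 0) :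
    ∃ ε₀ > 0, ∀ ε : ℝ, 0 < ε → ε < ε₀ →
      initialPart (u + ε • v) f = initialPart v (initialPart u f) := by
  classical
  set P : Finset ((Fin n →₀ ℕ) × (Fin n →₀ ℕ)) :=
    (f.support ×ˢ f.support).filter (fun μν => wt u μν.1 < wt u μν.2) with hP
  set q : (Fin n →₀ ℕ) × (Fin n →₀ ℕ) → ℝ :=
    fun μν => (wt u μν.2 - wt u μν.1) / (1 + |wt v μν.1 - wt v μν.2|) with hq
  have hqpos : ∀ μν ∈ P, 0 < q μν := by
    intro μν hμν
    have h1 : wt u μν.1 < wt u μν.2 := (Finset.mem_filter.mp hμν).2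
    have h2 : (0:ℝ) < 1 + |wt v μν.1 - wt v μν.2| := by positivity
    exact div_pos (by linarith) h2
  set ε₀ : ℝ := if h : P.Nonempty then P.inf' h q else 1 with hε₀
  have hε₀pos : 0 < ε₀ := by
    rw [hε₀]
    split_ifs with h
    · rw [Finset.lt_inf'_iff]
      exact fun b hb => hqpos b hb
    · norm_num
  refine ⟨ε₀, hε₀pos, ?_⟩
  intro ε hε hεlt
  have key : ∀ μ ν, μ ∈ f.support → ν ∈ f.support → wt u μ < wt u ν →
      wt u μ + ε * wt v μ < wt u ν + ε * wt v ν := by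
    intro μ ν hμ hν hlt
    have hmem : (μ, ν) ∈ P := Finset.mem_filter.mpr ⟨Finset.mem_product.mpr ⟨hμ, hν⟩, hlt⟩
    have hle : ε₀ ≤ q (μ, ν) := by
      rw [hε₀, dif_pos ⟨(μ,ν), hmem⟩]
      exact Finset.inf'_le q hmem
    have hqlt : ε < q (μ, ν) := lt_of_lt_of_le hεlt hle
    have hd : (0:ℝ) < 1 + |wt v μ - wt v ν| := by positivity
    have h3 : ε * (1 + |wt v μ - wt v ν|) < wt u ν - wt u μ := by
      have := (lt_div_iff₀ hd).mp hqlt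
      exact this
    have h1 : ε * (wt v μ - wt v ν) ≤ ε * |wt v μ - wt v ν| :=
      mul_le_mul_of_nonneg_left (le_abs_self _) hε.le
    have h2 : ε * |wt v μ - wt v ν| ≤ ε * (1 + |wt v μ - wt v ν|) :=
      mul_le_mul_of_nonneg_left (by linarith) hε.le
    have h4 : ε * (wt v μ - wt v ν) = ε * wt v μ - ε * wt v ν := by ring
    linarith
  apply MvPolynomial.ext
  intro τ
  by_cases hτ : f.coeff τ = 0
  · simp [coeff_initialPart, hτ]
  have hτs : τ ∈ f.support := MvPolynomial.mem_support_iff.mpr hτ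
  have hequiv : (∀ ν ∈ f.support, wt (u + ε • v) τ ≤ wt (u + ε • v) ν) ↔
      ((∀ ν ∈ f.support, wt u τ ≤ wt u ν) ∧
        (∀ ν ∈ (initialPart u f).support, wt v τ ≤ wt v ν)) := by
    constructor
    · intro hA
      have hB : ∀ ν ∈ f.support, wt u τ ≤ wt u ν := by
        intro ν hν
        by_contra hlt
        push_neg at hlt
        have h1 := key ν τ hν hτs hlt
        have h2 := hA ν hν
        rw [wt_add_smul, wt_add_smul] at h2
        linarith
      refine ⟨hB, ?_⟩
      intro ν hν
      obtain ⟨hν1, hν2⟩ := mem_support_initialPart.mp hν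
      have heq : wt u ν = wt u τ := le_antisymm (hν2 τ hτs) (hB ν hν1)
      have h2 := hA ν hν1
      rw [wt_add_smul, wt_add_smul, heq] at h2
      have := le_of_add_le_add_left h2
      exact le_of_mul_le_mul_left this hε
    · rintro ⟨hB, hC⟩ ν hν
      rw [wt_add_smul, wt_add_smul]
      by_cases h : wt u ν ≤ wt u τ
      · have heq : wt u ν = wt u τ := le_antisymm h (hB ν hν)
        have hνin : ν ∈ (initialPart u f).support :=
          mem_support_initialPart.mpr ⟨hν, fun ρ hρ => heq ▸ hB ρ hρ⟩
        have := hC ν hνin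
        have h2 : ε * wt v τ ≤ ε * wt v ν := mul_le_mul_of_nonneg_left this hε.le
        linarith
      · push_neg at h
        exact (key τ ν hτs hν h).le
  rw [coeff_initialPart, coeff_initialPart, coeff_initialPart]
  by_cases hB : ∀ ν ∈ f.support, wt u τ ≤ wt u ν
  · by_cases hC : ∀ ν ∈ (initialPart u f).support, wt v τ ≤ wt v ν
    · rw [if_pos (hequiv.mpr ⟨hB, hC⟩), if_pos hC, if_pos hB]
    · rw [if_neg (fun hA => hC (hequiv.mp hA).2), if_neg hC]
  · rw [if_neg (fun hA => hB (hequiv.mp hA).1), if_neg hB]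
    split_ifs <;> rfl

lemma wt_indicator (k : Fin n) (μ : Fin n →₀ ℕ) :
    wt (fun i => if i = k then (1:ℝ) else 0) μ = (μ k : ℝ) := by
  classical
  unfold wt
  have h : ∀ i ∈ Finset.univ, (if i = k then (1:ℝ) else 0) * (μ i : ℝ)
      = if i = k then (μ i : ℝ) else 0 := by
    intro i _; split_ifs <;> ring
  rw [Finset.sum_congr rfl h, Finset.sum_ite_eq' Finset.univ k]
  simp

lemma exists_monomial_single {u₀ : Fin n → ℝ} {r : ℝ} (hr : 0 < r)
    {J : Ideal (MvPolynomial (Fin n) K)}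
    (hball : ∀ u', dist u' u₀ < r → initialIdeal u' I = J)
    {f : MvPolynomial (Fin n) K} (hfI : f ∈ I) (hf0 : f ≠ 0) :
    ∃ μ ∈ (initialPart u₀ f).support, (monomial μ (1:K)) ∈ J := by
  classical
  have claim : ∀ k : ℕ, k ≤ n → ∃ u' : Fin n → ℝ,
      dist u' u₀ ≤ r/2 - r/(2^(k+1)) ∧
      (initialPart u' f).support ⊆ (initialPart u₀ f).support ∧
      ∀ μ ∈ (initialPart u' f).support, ∀ ν ∈ (initialPart u' f).support,
        ∀ j : Fin n, (j:ℕ) < k → μ j = ν j := by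
    intro k
    induction k with
    | zero =>
      intro _
      exact ⟨u₀, by simp, subset_rfl, fun μ _ ν _ j hj => absurd hj (Nat.not_lt_zero _)⟩
    | succ k ih =>
      intro hk
      obtain ⟨u', hd, hsub, hcoord⟩ := ih (Nat.le_of_succ_le hk)
      have hkn : k < n := hk
      set e : Fin n → ℝ := fun i => if i = ⟨k, hkn⟩ then (1:ℝ) else 0 with he
      obtain ⟨ε₀, hε₀pos, hε₀⟩ := initialPart_perturb u' e hf0
      set ε : ℝ := min (ε₀/2) (r/(2^(k+3))) with hε
      have hεpos : 0 < ε := lt_min (by linarith) (by positivity)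
      have hεlt : ε < ε₀ := lt_of_le_of_lt (min_le_left _ _) (by linarith)
      have hkey := hε₀ ε hεpos hεlt
      refine ⟨u' + ε • e, ?_, ?_, ?_⟩
      · have h1 : dist (u' + ε • e) u' ≤ ε := by
          rw [dist_comm, dist_self_add_right, norm_smul, Real.norm_eq_abs,
            abs_of_pos hεpos]
          have : ‖e‖ ≤ 1 := by
            apply pi_norm_le_iff_of_nonneg zero_le_one |>.mpr
            intro i
            rw [he]
            simp only [Real.norm_eq_abs]
            split_ifs <;> simp
          nlinarith
        have h2 : dist (u' + ε • e) u₀ ≤ dist (u' + ε • e) u' + dist u' u₀ :=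
          dist_triangle _ _ _
        have h3 : ε ≤ r/(2^(k+3)) := min_le_right _ _
        have hp : (0:ℝ) < 2^k := pow_pos zero_lt_two k
        have e1 : (2:ℝ)^(k+1) = 2^k*2 := pow_succ 2 k
        have e2 : (2:ℝ)^(k+2) = 2^k*4 := by rw [pow_succ, pow_succ]; ring
        have e3 : (2:ℝ)^(k+3) = 2^k*8 := by rw [pow_succ, pow_succ, pow_succ]; ring
        have h4 : r/(2^(k+3)) ≤ r/(2^(k+1)) - r/(2^(k+2)) := by
          rw [e1, e2, e3, div_mul_eq_div_div, div_mul_eq_div_div, div_mul_eq_div_div]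
          have hs : 0 ≤ r/2^k := div_nonneg hr.le hp.le
          linarith
        calc dist (u' + ε • e) u₀ ≤ ε + (r/2 - r/(2^(k+1))) := by linarith
          _ ≤ r/2 - r/(2^(k+2)) := by linarith
      · rw [hkey]
        exact (support_initialPart_subset _ _).trans hsub
      · intro μ hμ ν hν j hj
        rw [hkey] at hμ hν
        rcases Nat.lt_succ_iff_lt_or_eq.mp hj with h | h
        · exact hcoord μ (support_initialPart_subset _ _ hμ) ν
            (support_initialPart_subset _ _ hν) j h
        · have hjk : j = ⟨k, hkn⟩ := Fin.ext h
          subst hjk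
          have h1 := (mem_support_initialPart.mp hμ).2 ν (mem_support_initialPart.mp hν).1
          have h2 := (mem_support_initialPart.mp hν).2 μ (mem_support_initialPart.mp hμ).1
          rw [wt_indicator, wt_indicator] at h1 h2
          exact_mod_cast le_antisymm h1 h2
  obtain ⟨u', hd, hsub, hcoord⟩ := claim n le_rfl
  have hdlt : dist u' u₀ < r := by
    have : r/(2^(n+1)) > 0 := by positivity
    linarith
  have hg0 : initialPart u' f ≠ 0 := initialPart_ne_zero hf0
  obtain ⟨μs, hμs⟩ := MvPolynomial.support_nonempty.mpr hg0
  have hsingle : ∀ τ ∈ (initialPart u' f).support, τ = μs := by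
    intro τ hτ
    apply Finsupp.ext
    intro j
    exact hcoord τ hτ μs hμs j j.isLt
  have hgJ : initialPart u' f ∈ J := hball u' hdlt ▸ initialPart_mem_initialIdeal hfI hf0
  have hc : (initialPart u' f).coeff μs ≠ 0 := MvPolynomial.mem_support_iff.mp hμs
  refine ⟨μs, hsub hμs, ?_⟩
  have hmono : monomial μs (1:K) = C ((initialPart u' f).coeff μs)⁻¹ * initialPart u' f := by
    apply MvPolynomial.ext
    intro τ
    rw [MvPolynomial.coeff_C_mul, coeff_monomial]
    rcases eq_or_ne μs τ with h | h
    · subst h; rw [if_pos rfl, inv_mul_cancel₀ hc]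
    · rw [if_neg h]
      have : τ ∉ (initialPart u' f).support := fun hτ => h (hsingle τ hτ).symm
      rw [MvPolynomial.notMem_support_iff.mp this, mul_zero]
  rw [hmono]
  exact J.mul_mem_left _ hgJ

lemma monomial_mem_of_mem {u₀ : Fin n → ℝ} {r : ℝ} (hr : 0 < r)
    {J : Ideal (MvPolynomial (Fin n) K)}
    (hball : ∀ u', dist u' u₀ < r → initialIdeal u' I = J)
    {g : MvPolynomial (Fin n) K} (hgJ : g ∈ J) {μ : Fin n →₀ ℕ} (hμ : μ ∈ g.support) :
    monomial μ (1:K) ∈ J := by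
  classical
  have hu₀ : initialIdeal u₀ I = J := hball u₀ (by simpa using hr)
  have main : ∀ N : ℕ, ∀ f ∈ I, f ≠ 0 → (initialPart u₀ f).support.card ≤ N →
      ∀ τ ∈ (initialPart u₀ f).support, monomial τ (1:K) ∈ J := by
    intro N
    induction N with
    | zero =>
      intro f _ _ hcard τ hτ
      rw [Finset.card_eq_zero.mp (Nat.le_zero.mp hcard)] at hτ
      exact absurd hτ (Finset.notMem_empty τ)
    | succ N ih =>
      intro f hfI hf0 hcard τ hτ
      obtain ⟨μs, hμs, hμsJ⟩ := exists_monomial_single hr hball hfI hf0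
      by_cases heq : τ = μs
      · exact heq ▸ hμsJ
      have hgJ' : initialPart u₀ f ∈ J := hu₀ ▸ initialPart_mem_initialIdeal hfI hf0
      set g' : MvPolynomial (Fin n) K :=
        initialPart u₀ f - C ((initialPart u₀ f).coeff μs) * monomial μs 1 with hg'
      have hg'J : g' ∈ J := J.sub_mem hgJ' (J.mul_mem_left _ hμsJ)
      have hcoeff' : ∀ ρ, g'.coeff ρ
          = if ρ = μs then 0 else (initialPart u₀ f).coeff ρ := by
        intro ρ
        rw [hg', MvPolynomial.coeff_sub, MvPolynomial.coeff_C_mul, coeff_monomial]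
        rcases eq_or_ne ρ μs with h | h
        · subst h; rw [if_pos rfl, if_pos rfl]; ring
        · rw [if_neg (Ne.symm h), if_neg h]; ring
      have hsupp' : g'.support = (initialPart u₀ f).support \ {μs} := by
        ext ρ
        rw [MvPolynomial.mem_support_iff, hcoeff', Finset.mem_sdiff,
          MvPolynomial.mem_support_iff, Finset.mem_singleton]
        rcases eq_or_ne ρ μs with h | h
        · simp [h]
        · simp [h]
      have hτ' : τ ∈ g'.support := by
        rw [hsupp', Finset.mem_sdiff, Finset.mem_singleton]
        exact ⟨hτ, heq⟩
      have hg'0 : g' ≠ 0 := fun h0 => by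
        rw [h0] at hτ'; exact absurd hτ' (Finset.notMem_empty τ)
      obtain ⟨ρ₀, hρ₀⟩ := MvPolynomial.support_nonempty.mpr hg'0
      have hmem1 : ∀ ρ ∈ g'.support, ρ ∈ (initialPart u₀ f).support := by
        intro ρ hρ
        exact (Finset.mem_sdiff.mp (hsupp' ▸ hρ)).1
      have hiso : ∀ ρ ∈ g'.support, wt u₀ ρ = wt u₀ ρ₀ := fun ρ hρ =>
        wt_eq_of_mem_support_initialPart (hmem1 ρ hρ) (hmem1 ρ₀ hρ₀)
      have hproj : proj u₀ (wt u₀ ρ₀) g' = g' := proj_eq_self hiso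
      have hg'I : g' ∈ initialIdeal u₀ I := hu₀.symm ▸ hg'J
      rcases proj_initialIdeal hg'I (wt u₀ ρ₀) with h0 | ⟨f', hf'I, hf'0, hf'⟩
      · rw [hproj] at h0; exact absurd h0 hg'0
      rw [hproj] at hf'
      have hcard' : (initialPart u₀ f').support.card ≤ N := by
        rw [← hf', hsupp', Finset.card_sdiff_of_subset (Finset.singleton_subset_iff.mpr hμs)]
        rw [Finset.card_singleton]
        omega
      exact ih f' hf'I hf'0 hcard' τ (hf' ▸ hτ')
  have hgI : g ∈ initialIdeal u₀ I := hu₀.symm ▸ hgJ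
  have hμp : μ ∈ (proj u₀ (wt u₀ μ) g).support := mem_support_proj.mpr ⟨hμ, rfl⟩
  rcases proj_initialIdeal hgI (wt u₀ μ) with h0 | ⟨f, hfI, hf0, hf⟩
  · rw [h0] at hμp; exact absurd hμp (Finset.notMem_empty μ)
  rw [hf] at hμp
  exact main _ f hfI hf0 le_rfl μ hμp

/-- The backward direction: nonempty interior implies monomial initial ideal. -/
lemma monomial_of_interior {w : Fin n → ℝ}
    (hne : (interior {u : Fin n → ℝ |
        (∀ i, 0 ≤ u i) ∧ initialIdeal u I = initialIdeal w I}).Nonempty) :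
    ∃ S : Set (Fin n →₀ ℕ),
        initialIdeal w I = Ideal.span ((fun a => (monomial a (1 : K))) '' S) := by
  obtain ⟨u₀, hu₀⟩ := hne
  obtain ⟨r, hr, hsub⟩ := Metric.mem_nhds_iff.mp (mem_interior_iff_mem_nhds.mp hu₀)
  have hball : ∀ u', dist u' u₀ < r → initialIdeal u' I = initialIdeal w I :=
    fun u' h => (hsub (Metric.mem_ball.mpr h)).2
  refine ⟨{a | monomial a (1:K) ∈ initialIdeal w I}, ?_⟩
  apply le_antisymm
  · intro g hg
    rw [mem_ideal_span_monomial_image]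
    intro μ hμ
    exact ⟨μ, monomial_mem_of_mem hr hball hg hμ, le_rfl⟩
  · rw [Ideal.span_le]
    rintro x ⟨a, ha, rfl⟩
    exact ha

lemma exists_pos_le {α : Type*} (s : Finset α) (g : α → ℝ) (h : ∀ a ∈ s, 0 < g a) :
    ∃ r > 0, ∀ a ∈ s, r ≤ g a := by
  rcases s.eq_empty_or_nonempty with rfl | hne
  · exact ⟨1, one_pos, fun a ha => absurd ha (Finset.notMem_empty a)⟩
  · exact ⟨s.inf' hne g, (Finset.lt_inf'_iff hne).mpr h, fun a ha => Finset.inf'_le g ha⟩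

lemma wt_le_sum_div {u w : Fin n → ℝ} (hu : ∀ i, 0 < u i) (hw : ∀ i, 0 ≤ w i)
    (μ : Fin n →₀ ℕ) : wt w μ ≤ (∑ i, w i / u i) * wt u μ := by
  have hC : ∀ i, w i / u i ≤ ∑ j, w j / u j := by
    intro i
    exact Finset.single_le_sum (fun j _ => div_nonneg (hw j) (hu j).le) (Finset.mem_univ i)
  have hterm : ∀ i ∈ Finset.univ, w i * (μ i : ℝ) ≤ (∑ j, w j / u j) * (u i * (μ i : ℝ)) := by
    intro i _
    have hui : u i ≠ 0 := (hu i).ne'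
    have h1 : w i * (μ i : ℝ) = (w i / u i) * (u i * (μ i : ℝ)) := by
      field_simp
    rw [h1]
    exact mul_le_mul_of_nonneg_right (hC i)
      (mul_nonneg (hu i).le (by positivity))
  calc wt w μ = ∑ i, w i * (μ i : ℝ) := rfl
    _ ≤ ∑ i, (∑ j, w j / u j) * (u i * (μ i : ℝ)) := Finset.sum_le_sum hterm
    _ = (∑ j, w j / u j) * wt u μ := by rw [← Finset.mul_sum]; rfl

lemma exists_bound_finset {w : Fin n → ℝ} (hw : ∀ i, 0 < w i) (B : ℝ) :
    ∃ E : Finset (Fin n →₀ ℕ), ∀ μ, wt w μ ≤ B → μ ∈ E := by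
  classical
  obtain ⟨r₀, hr₀, hr₀le⟩ := exists_pos_le Finset.univ w (fun i _ => hw i)
  set N₀ : ℕ := ⌈B/r₀⌉₊ with hN₀
  refine ⟨(Finset.univ : Finset (Fin n → Fin (N₀+1))).image
    (fun v => Finsupp.equivFunOnFinite.symm (fun i => (v i : ℕ))), ?_⟩
  intro μ hμ
  have hcoord : ∀ i, μ i ≤ N₀ := by
    intro i
    have h1 : r₀ * (μ i : ℝ) ≤ wt w μ := by
      have : w i * (μ i : ℝ) ≤ wt w μ :=
        Finset.single_le_sum (f := fun j => w j * (μ j : ℝ))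
          (fun j _ => mul_nonneg (hw j).le (by positivity)) (Finset.mem_univ i)
      have h2 : r₀ * (μ i : ℝ) ≤ w i * (μ i : ℝ) :=
        mul_le_mul_of_nonneg_right (hr₀le i (Finset.mem_univ i)) (by positivity)
      linarith
    have h3 : (μ i : ℝ) ≤ B / r₀ := by
      rw [le_div_iff₀ hr₀]
      linarith
    have h4 : (μ i : ℝ) ≤ (N₀ : ℝ) := h3.trans (Nat.le_ceil _)
    exact_mod_cast h4
  rw [Finset.mem_image]
  refine ⟨fun i => ⟨μ i, Nat.lt_succ_of_le (hcoord i)⟩, Finset.mem_univ _, ?_⟩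
  apply Finsupp.ext
  intro i
  simp [Finsupp.equivFunOnFinite]

lemma abs_wt_sub_le (u w : Fin n → ℝ) (μ : Fin n →₀ ℕ) :
    |wt u μ - wt w μ| ≤ dist u w * ∑ i, (μ i : ℝ) := by
  have h1 : wt u μ - wt w μ = ∑ i, (u i - w i) * (μ i : ℝ) := by
    unfold wt
    rw [← Finset.sum_sub_distrib]
    exact Finset.sum_congr rfl fun i _ => by ring
  rw [h1]
  calc |∑ i, (u i - w i) * (μ i : ℝ)| ≤ ∑ i, |(u i - w i) * (μ i : ℝ)| :=
        Finset.abs_sum_le_sum_abs _ _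
    _ ≤ ∑ i, dist u w * (μ i : ℝ) := by
        apply Finset.sum_le_sum
        intro i _
        rw [abs_mul, abs_of_nonneg (by positivity : (0:ℝ) ≤ (μ i : ℝ))]
        apply mul_le_mul_of_nonneg_right _ (by positivity)
        rw [← Real.dist_eq]
        exact dist_le_pi_dist u w i
    _ = dist u w * ∑ i, (μ i : ℝ) := (Finset.mul_sum _ _ _).symm

lemma initialPart_stable {w : Fin n → ℝ} {f : MvPolynomial (Fin n) K} {a : Fin n →₀ ℕ} {c : K}
    (hIn : initialPart w f = monomial a c) (hc : c ≠ 0) :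
    ∃ r > 0, ∀ u : Fin n → ℝ, dist u w < r → initialPart u f = monomial a c := by
  classical
  have ha_supp : a ∈ (initialPart w f).support := by
    rw [hIn, MvPolynomial.support_monomial, if_neg hc]
    exact Finset.mem_singleton_self a
  obtain ⟨haf, hamin⟩ := mem_support_initialPart.mp ha_supp
  have hsuppIn : (initialPart w f).support = {a} := by
    rw [hIn, MvPolynomial.support_monomial, if_neg hc]
  have hstrict : ∀ ν ∈ f.support, ν ≠ a → wt w a < wt w ν := by
    intro ν hν hνa
    rcases lt_or_eq_of_le (hamin ν hν) with h | h
    · exact h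
    · exfalso
      apply hνa
      have : ν ∈ (initialPart w f).support :=
        mem_support_initialPart.mpr ⟨hν, fun ρ hρ => h ▸ hamin ρ hρ⟩
      rw [hsuppIn] at this
      exact Finset.mem_singleton.mp this
  have hcoeffa : f.coeff a = c := by
    have h1 := coeff_initialPart_of_mem ha_supp
    rw [hIn, coeff_monomial, if_pos rfl] at h1
    exact h1.symm
  set Q := f.support.erase a with hQ
  set q : (Fin n →₀ ℕ) → ℝ :=
    fun ν => (wt w ν - wt w a) / (1 + (∑ i, (ν i : ℝ)) + (∑ i, (a i : ℝ))) with hq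
  have hqpos : ∀ ν ∈ Q, 0 < q ν := by
    intro ν hν
    obtain ⟨hνa, hνf⟩ := Finset.mem_erase.mp hν
    exact div_pos (by linarith [hstrict ν hνf hνa]) (by positivity)
  set r : ℝ := if h : Q.Nonempty then Q.inf' h q else 1 with hr
  have hrpos : 0 < r := by
    rw [hr]
    split_ifs with h
    · exact (Finset.lt_inf'_iff h).mpr hqpos
    · norm_num
  refine ⟨r, hrpos, ?_⟩
  intro u hdist
  have key : ∀ ν ∈ f.support, ν ≠ a → wt u a < wt u ν := by
    intro ν hν hνa
    have hmem : ν ∈ Q := Finset.mem_erase.mpr ⟨hνa, hν⟩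
    have hle : r ≤ q ν := by
      rw [hr, dif_pos ⟨ν, hmem⟩]
      exact Finset.inf'_le q hmem
    have hqlt : dist u w < q ν := lt_of_lt_of_le hdist hle
    have hD : (0:ℝ) < 1 + (∑ i, (ν i : ℝ)) + (∑ i, (a i : ℝ)) := by positivity
    have h3 : dist u w * (1 + (∑ i, (ν i : ℝ)) + (∑ i, (a i : ℝ))) < wt w ν - wt w a :=
      (lt_div_iff₀ hD).mp hqlt
    have habs1 := abs_le.mp (abs_wt_sub_le u w a)
    have habs2 := abs_le.mp (abs_wt_sub_le u w ν)
    have hexp : dist u w * (1 + (∑ i, (ν i : ℝ)) + (∑ i, (a i : ℝ)))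
        = dist u w + dist u w * (∑ i, (ν i : ℝ)) + dist u w * (∑ i, (a i : ℝ)) := by ring
    have hd0 : 0 ≤ dist u w := dist_nonneg
    rw [hexp] at h3
    linarith [habs1.1, habs1.2, habs2.1, habs2.2]
  apply MvPolynomial.ext
  intro τ
  rw [coeff_initialPart, coeff_monomial]
  by_cases hτa : τ = a
  · subst hτa
    rw [if_pos rfl, if_pos, hcoeffa]
    intro ν hν
    rcases eq_or_ne ν τ with h | h
    · rw [h]
    · exact (key ν hν h).le
  · rw [if_neg (show ¬(a = τ) from fun h => hτa h.symm)]
    by_cases hτf : τ ∈ f.support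
    · have hncond : ¬∀ ν ∈ f.support, wt u τ ≤ wt u ν :=
        fun hall => absurd (hall a haf) (not_le.mpr (key τ hτf hτa))
      rw [if_neg hncond]
    · rw [MvPolynomial.notMem_support_iff.mp hτf]
      split_ifs <;> rfl

lemma initialPart_zero (v : Fin n → ℝ) : initialPart v (0 : MvPolynomial (Fin n) K) = 0 := by
  simp [initialPart]

lemma initialPart_reducer {v : Fin n → ℝ} {g : MvPolynomial (Fin n) K} {a b : Fin n →₀ ℕ}
    {c : K} (hg : initialPart v g = monomial a 1) (hc : c ≠ 0) :
    initialPart v (monomial b c * g) = monomial (a + b) c := by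
  classical
  have hg0 : g ≠ 0 := by
    intro h0
    rw [h0, initialPart_zero] at hg
    have : (1:K) = 0 := by
      have := congrArg (MvPolynomial.coeff a) hg
      rw [MvPolynomial.coeff_zero, coeff_monomial, if_pos rfl] at this
      exact this.symm
    exact one_ne_zero this
  have hmono0 : (monomial b c : MvPolynomial (Fin n) K) ≠ 0 := by
    intro h0
    have := congrArg (MvPolynomial.coeff b) h0
    rw [coeff_monomial, if_pos rfl, MvPolynomial.coeff_zero] at this
    exact hc this
  have hiso : ∀ p ∈ (monomial b c : MvPolynomial (Fin n) K).support, wt v p = wt v b := by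
    intro p hp
    rw [MvPolynomial.support_monomial, if_neg hc] at hp
    rw [Finset.mem_singleton.mp hp]
  rw [initialPart_mul_isobaric hiso hmono0 hg0, hg, MvPolynomial.monomial_mul, mul_one,
    add_comm b a]

lemma coeff_sub_monomial (g : MvPolynomial (Fin n) K) (μ τ : Fin n →₀ ℕ) :
    (g - monomial μ (g.coeff μ)).coeff τ = if τ = μ then 0 else g.coeff τ := by
  rw [MvPolynomial.coeff_sub, coeff_monomial]
  rcases eq_or_ne τ μ with h | h
  · subst h; rw [if_pos rfl, if_pos rfl, sub_self]
  · rw [if_neg (Ne.symm h), if_neg h, sub_zero]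

lemma support_sub_monomial (g : MvPolynomial (Fin n) K) (μ : Fin n →₀ ℕ) :
    (g - monomial μ (g.coeff μ)).support = g.support \ {μ} := by
  ext τ
  rw [MvPolynomial.mem_support_iff, coeff_sub_monomial, Finset.mem_sdiff,
    MvPolynomial.mem_support_iff, Finset.mem_singleton]
  rcases eq_or_ne τ μ with h | h
  · simp [h]
  · simp [h]

lemma claimD {u w : Fin n → ℝ} (hu : ∀ i, 0 < u i) (hw : ∀ i, 0 < w i)
    {A : Finset (Fin n →₀ ℕ)} {F : (Fin n →₀ ℕ) → MvPolynomial (Fin n) K}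
    (hFI : ∀ a ∈ A, F a ∈ I)
    (hFu : ∀ a ∈ A, initialPart u (F a) = monomial a 1)
    (hFw : ∀ a ∈ A, initialPart w (F a) = monomial a 1)
    (hdiv : ∀ f ∈ I, f ≠ 0 → ∀ μ ∈ (initialPart w f).support, ∃ a ∈ A, a ≤ μ)
    {f : MvPolynomial (Fin n) K} (hfI : f ∈ I) (hf0 : f ≠ 0) :
    ∃ μ ∈ (initialPart u f).support, ∃ a ∈ A, a ≤ μ := by
  classical
  by_contra hstd
  push_neg at hstd
  obtain ⟨τ₀, hτ₀⟩ := MvPolynomial.support_nonempty.mpr (initialPart_ne_zero (u := u) hf0)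
  set m := wt u τ₀ with hmdef
  set C := ∑ i, w i / u i with hCdef
  obtain ⟨E, hE⟩ := exists_bound_finset hw (C * m)
  set Φ : MvPolynomial (Fin n) K → ℕ := fun p =>
    (E.filter (fun μ => ∃ τ ∈ (initialPart w p).support, wt w τ ≤ wt w μ)).card * (E.card + 1)
      + (initialPart w p).support.card with hΦ
  suffices main : ∀ N, ∀ f', f' ∈ I → f' ≠ 0 → initialPart u f' = initialPart u f →
      Φ f' < N → False by
    exact main (Φ f + 1) f hfI hf0 rfl (Nat.lt_succ_self _)
  intro N
  induction N with
  | zero => exact fun f' _ _ _ h => absurd h (Nat.not_lt_zero _)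
  | succ N ih =>
    intro f' hf'I hf'0 hf'u hΦlt
    have hg0 : initialPart u f' ≠ 0 := initialPart_ne_zero hf'0
    have hτ₀' : τ₀ ∈ (initialPart u f').support := by rw [hf'u]; exact hτ₀
    have hmin_u : ∀ ν ∈ f'.support, m ≤ wt u ν := (mem_support_initialPart.mp hτ₀').2
    obtain ⟨τw, hτw⟩ := MvPolynomial.support_nonempty.mpr (initialPart_ne_zero (u := w) hf'0)
    obtain ⟨a, haA, hale⟩ := hdiv f' hf'I hf'0 τw hτw
    obtain ⟨b, hb⟩ := le_iff_exists_add.mp hale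
    obtain ⟨hτwf, hminw⟩ := mem_support_initialPart.mp hτw
    set c := f'.coeff τw with hcdef
    have hc0 : c ≠ 0 := MvPolynomial.mem_support_iff.mp hτwf
    set h : MvPolynomial (Fin n) K := monomial b c * F a with hhdef
    have hhu : initialPart u h = monomial (a + b) c := initialPart_reducer (hFu a haA) hc0
    have hhw : initialPart w h = monomial (a + b) c := initialPart_reducer (hFw a haA) hc0
    rw [← hb] at hhu hhw
    set f'' : MvPolynomial (Fin n) K := f' - h with hf''def
    have hf''I : f'' ∈ I := I.sub_mem hf'I (I.mul_mem_left _ (hFI a haA))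
    have hτw_in_hu : τw ∈ (initialPart u h).support := by
      rw [hhu, MvPolynomial.support_monomial, if_neg hc0]
      exact Finset.mem_singleton_self τw
    have hh_u : ∀ ρ ∈ h.support, wt u τw ≤ wt u ρ := (mem_support_initialPart.mp hτw_in_hu).2
    have hτw_not : τw ∉ (initialPart u f').support := by
      intro hmem
      rw [hf'u] at hmem
      exact hstd τw hmem a haA hale
    have hlt : m < wt u τw := by
      rcases lt_or_eq_of_le (hmin_u τw hτwf) with hlt | heq
      · exact hlt
      · exact absurd (mem_support_initialPart.mpr ⟨hτwf, fun ρ hρ => heq ▸ hmin_u ρ hρ⟩)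
          hτw_not
    have hs'' : ∀ ρ ∈ f''.support, m ≤ wt u ρ := by
      intro ρ hρ
      rcases Finset.mem_union.mp (MvPolynomial.support_sub _ f' h hρ) with hρ' | hρ'
      · exact hmin_u ρ hρ'
      · linarith [hh_u ρ hρ']
    have hproju : proj u m f'' = initialPart u f' := by
      rw [hf''def, proj_sub]
      have h1 : proj u m f' = initialPart u f' :=
        (initialPart_eq_proj hmin_u ⟨τ₀, (mem_support_initialPart.mp hτ₀').1, rfl⟩).symm
      have h2 : proj u m h = 0 := by
        apply proj_eq_zero
        intro ρ hρ
        have := hh_u ρ hρ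
        intro hρm
        rw [hρm] at this
        linarith
      rw [h1, h2, sub_zero]
    have hf''0 : f'' ≠ 0 :=
      ne_zero_of_proj_ne_zero (u := u) (c := m) (by rw [hproju]; exact hg0)
    have hf''u : initialPart u f'' = initialPart u f := by
      rw [initialPart_eq_proj_of_ne_zero hs'' (by rw [hproju]; exact hg0), hproju, hf'u]
    -- w-side
    have hτw_in_hw : τw ∈ (initialPart w h).support := by
      rw [hhw, MvPolynomial.support_monomial, if_neg hc0]
      exact Finset.mem_singleton_self τw
    have hh_w : ∀ ρ ∈ h.support, wt w τw ≤ wt w ρ := (mem_support_initialPart.mp hτw_in_hw).2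
    have hsw'' : ∀ ρ ∈ f''.support, wt w τw ≤ wt w ρ := by
      intro ρ hρ
      rcases Finset.mem_union.mp (MvPolynomial.support_sub _ f' h hρ) with hρ' | hρ'
      · exact hminw ρ hρ'
      · exact hh_w ρ hρ'
    have hprojw_h : proj w (wt w τw) h = monomial τw c := by
      rw [← initialPart_eq_proj hh_w ⟨τw, (mem_support_initialPart.mp hτw_in_hw).1, rfl⟩, hhw]
    have hprojwf' : proj w (wt w τw) f' = initialPart w f' :=
      (initialPart_eq_proj hminw ⟨τw, hτwf, rfl⟩).symm
    have hcw : (initialPart w f').coeff τw = c := coeff_initialPart_of_mem hτw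
    set q : MvPolynomial (Fin n) K := initialPart w f' - monomial τw c with hqdef
    have hprojw : proj w (wt w τw) f'' = q := by
      rw [hf''def, proj_sub, hprojw_h, hprojwf', hqdef]
    have hqsupp : q.support = (initialPart w f').support \ {τw} := by
      rw [hqdef, ← hcw]
      exact support_sub_monomial _ _
    have hwlevel : ∀ τ ∈ (initialPart w f').support, wt w τ = wt w τw :=
      fun τ hτ => wt_eq_of_mem_support_initialPart hτ hτw
    have hbound : wt w τw ≤ C * m := by
      calc wt w τw ≤ wt w τ₀ := hminw τ₀ ((mem_support_initialPart.mp hτ₀').1)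
        _ ≤ C * wt u τ₀ := wt_le_sum_div hu (fun i => (hw i).le) τ₀
        _ = C * m := rfl
    have hτwE : τw ∈ E := hE τw hbound
    by_cases hq0 : q = 0
    · have hproj0 : proj w (wt w τw) f'' = 0 := by rw [hprojw, hq0]
      have hgt : ∀ τ ∈ (initialPart w f'').support, wt w τw < wt w τ := by
        intro τ hτ
        obtain ⟨hτf'', hτmin⟩ := mem_support_initialPart.mp hτ
        rcases lt_or_eq_of_le (hsw'' τ hτf'') with h' | h'
        · exact h'
        · exfalso
          have : τ ∈ (proj w (wt w τw) f'').support := mem_support_proj.mpr ⟨hτf'', h'.symm⟩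
          rw [hproj0] at this
          exact absurd this (Finset.notMem_empty τ)
      set P' := E.filter (fun μ => ∃ τ ∈ (initialPart w f').support, wt w τ ≤ wt w μ) with hP'
      set P'' := E.filter (fun μ => ∃ τ ∈ (initialPart w f'').support, wt w τ ≤ wt w μ) with hP''
      have hsubP : P'' ⊆ P' := by
        intro μ hμ
        obtain ⟨hμE, τ, hτ, hle'⟩ := Finset.mem_filter.mp hμ
        exact Finset.mem_filter.mpr ⟨hμE, τw, hτw, le_trans (hgt τ hτ).le hle'⟩
      have hτwP' : τw ∈ P' := Finset.mem_filter.mpr ⟨hτwE, τw, hτw, le_rfl⟩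
      have hτwP'' : τw ∉ P'' := by
        intro hmem
        obtain ⟨_, τ, hτ, hle'⟩ := Finset.mem_filter.mp hmem
        exact absurd hle' (not_le.mpr (hgt τ hτ))
      have hcardP : P''.card < P'.card :=
        Finset.card_lt_card ⟨hsubP, fun hPP => hτwP'' (hPP hτwP')⟩
      have hsupp''E : (initialPart w f'').support ⊆ E := by
        intro τ hτ
        apply hE
        obtain ⟨hτf'', hτmin⟩ := mem_support_initialPart.mp hτ
        have hτ₀'' : τ₀ ∈ f''.support := by
          have h5 : τ₀ ∈ (initialPart u f'').support := by
            rw [hf''u]; exact hτ₀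
          exact (mem_support_initialPart.mp h5).1
        calc wt w τ ≤ wt w τ₀ := hτmin τ₀ hτ₀''
          _ ≤ C * wt u τ₀ := wt_le_sum_div hu (fun i => (hw i).le) τ₀
          _ = C * m := rfl
      have hs''le : (initialPart w f'').support.card ≤ E.card := Finset.card_le_card hsupp''E
      have hΦ'' : Φ f'' < Φ f' := by
        have e2 : (P''.card + 1) * (E.card + 1) = P''.card * (E.card + 1) + E.card + 1 := by
          ring
        have hmul : (P''.card + 1) * (E.card + 1) ≤ P'.card * (E.card + 1) :=
          Nat.mul_le_mul_right _ hcardP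
        have e4 : Φ f'' = P''.card * (E.card + 1) + (initialPart w f'').support.card := rfl
        have e5 : Φ f' = P'.card * (E.card + 1) + (initialPart w f').support.card := rfl
        omega
      exact ih f'' hf''I hf''0 hf''u (by omega)
    · have hInw'' : initialPart w f'' = q := by
        rw [initialPart_eq_proj_of_ne_zero hsw'' (by rw [hprojw]; exact hq0), hprojw]
      have hsupp'' : (initialPart w f'').support = (initialPart w f').support \ {τw} := by
        rw [hInw'', hqsupp]
      obtain ⟨σ₁, hσ₁⟩ := MvPolynomial.support_nonempty.mpr
        (show initialPart w f'' ≠ 0 by rw [hInw'']; exact hq0)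
      have hσ₁w : wt w σ₁ = wt w τw := by
        have h6 : σ₁ ∈ (initialPart w f').support := (Finset.mem_sdiff.mp (hsupp'' ▸ hσ₁)).1
        exact hwlevel σ₁ h6
      have hPeq : E.filter (fun μ => ∃ τ ∈ (initialPart w f'').support, wt w τ ≤ wt w μ)
          = E.filter (fun μ => ∃ τ ∈ (initialPart w f').support, wt w τ ≤ wt w μ) := by
        apply Finset.filter_congr
        intro μ _
        constructor
        · rintro ⟨τ, hτ, hle'⟩
          exact ⟨τ, (Finset.mem_sdiff.mp (hsupp'' ▸ hτ)).1, hle'⟩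
        · rintro ⟨τ, hτ, hle'⟩
          refine ⟨σ₁, hσ₁, ?_⟩
          rw [hσ₁w, ← hwlevel τ hτ]
          exact hle'
      have hcard'' : (initialPart w f'').support.card < (initialPart w f').support.card := by
        rw [hsupp'', Finset.card_sdiff_of_subset (Finset.singleton_subset_iff.mpr hτw),
          Finset.card_singleton]
        have hpos : 0 < (initialPart w f').support.card := Finset.card_pos.mpr ⟨τw, hτw⟩
        omega
      have hΦ'' : Φ f'' < Φ f' := by
        have e4 : Φ f'' = (E.filter (fun μ => ∃ τ ∈ (initialPart w f'').support,
            wt w τ ≤ wt w μ)).card * (E.card + 1) + (initialPart w f'').support.card := rfl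
        have e5 : Φ f' = (E.filter (fun μ => ∃ τ ∈ (initialPart w f').support,
            wt w τ ≤ wt w μ)).card * (E.card + 1) + (initialPart w f').support.card := rfl
        rw [e4, e5, hPeq]
        omega
      exact ih f'' hf''I hf''0 hf''u (by omega)

lemma initialPart_mem_span {u w : Fin n → ℝ} (hu : ∀ i, 0 < u i) (hw : ∀ i, 0 < w i)
    {J : Ideal (MvPolynomial (Fin n) K)}
    {A : Finset (Fin n →₀ ℕ)} {F : (Fin n →₀ ℕ) → MvPolynomial (Fin n) K}
    (hFI : ∀ a ∈ A, F a ∈ I)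
    (hFu : ∀ a ∈ A, initialPart u (F a) = monomial a 1)
    (hFw : ∀ a ∈ A, initialPart w (F a) = monomial a 1)
    (hdiv : ∀ f ∈ I, f ≠ 0 → ∀ μ ∈ (initialPart w f).support, ∃ a ∈ A, a ≤ μ)
    (hA1 : ∀ a ∈ A, monomial a (1:K) ∈ J)
    {f : MvPolynomial (Fin n) K} (hfI : f ∈ I) (hf0 : f ≠ 0) : initialPart u f ∈ J := by
  classical
  suffices main : ∀ N, ∀ f', f' ∈ I → f' ≠ 0 → (initialPart u f').support.card < N →
      initialPart u f' ∈ J by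
    exact main ((initialPart u f).support.card + 1) f hfI hf0 (Nat.lt_succ_self _)
  intro N
  induction N with
  | zero => exact fun f' _ _ h => absurd h (Nat.not_lt_zero _)
  | succ N ih =>
    intro f' hf'I hf'0 hcard
    obtain ⟨μ, hμ, a, haA, hale⟩ := claimD hu hw hFI hFu hFw hdiv hf'I hf'0
    obtain ⟨b, hb⟩ := le_iff_exists_add.mp hale
    obtain ⟨hμf, hμmin⟩ := mem_support_initialPart.mp hμ
    set c := f'.coeff μ with hcdef
    have hc0 : c ≠ 0 := MvPolynomial.mem_support_iff.mp hμf
    set h : MvPolynomial (Fin n) K := monomial b c * F a with hhdef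
    have hhu : initialPart u h = monomial (a + b) c := initialPart_reducer (hFu a haA) hc0
    rw [← hb] at hhu
    have hmonJ : monomial μ c ∈ J := by
      have h1 : (monomial b c : MvPolynomial (Fin n) K) * monomial a 1 = monomial μ c := by
        rw [MvPolynomial.monomial_mul, mul_one, add_comm b a, ← hb]
      rw [← h1]
      exact J.mul_mem_left _ (hA1 a haA)
    have hτw_in_hu : μ ∈ (initialPart u h).support := by
      rw [hhu, MvPolynomial.support_monomial, if_neg hc0]
      exact Finset.mem_singleton_self μ
    have hh_u : ∀ ρ ∈ h.support, wt u μ ≤ wt u ρ := (mem_support_initialPart.mp hτw_in_hu).2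
    set f'' : MvPolynomial (Fin n) K := f' - h with hf''def
    have hf''I : f'' ∈ I := I.sub_mem hf'I (I.mul_mem_left _ (hFI a haA))
    have hs'' : ∀ ρ ∈ f''.support, wt u μ ≤ wt u ρ := by
      intro ρ hρ
      rcases Finset.mem_union.mp (MvPolynomial.support_sub _ f' h hρ) with hρ' | hρ'
      · exact hμmin ρ hρ'
      · exact hh_u ρ hρ'
    have hproj_h : proj u (wt u μ) h = monomial μ c := by
      rw [← initialPart_eq_proj hh_u ⟨μ, (mem_support_initialPart.mp hτw_in_hu).1, rfl⟩, hhu]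
    have hproj_f' : proj u (wt u μ) f' = initialPart u f' :=
      (initialPart_eq_proj hμmin ⟨μ, hμf, rfl⟩).symm
    set q : MvPolynomial (Fin n) K := initialPart u f' - monomial μ c with hqdef
    have hprojq : proj u (wt u μ) f'' = q := by
      rw [hf''def, proj_sub, hproj_h, hproj_f', hqdef]
    have hcin : (initialPart u f').coeff μ = c := coeff_initialPart_of_mem hμ
    have hqsupp : q.support = (initialPart u f').support \ {μ} := by
      rw [hqdef, ← hcin]
      exact support_sub_monomial _ _
    by_cases hq0 : q = 0
    · have : initialPart u f' = monomial μ c := by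
        have := sub_eq_zero.mp (hqdef ▸ hq0)
        exact this
      rw [this]
      exact hmonJ
    · have hf''0 : f'' ≠ 0 :=
        ne_zero_of_proj_ne_zero (u := u) (c := wt u μ) (by rw [hprojq]; exact hq0)
      have hInq : initialPart u f'' = q := by
        rw [initialPart_eq_proj_of_ne_zero hs'' (by rw [hprojq]; exact hq0), hprojq]
      have hcard'' : (initialPart u f'').support.card < N := by
        rw [hInq, hqsupp, Finset.card_sdiff_of_subset (Finset.singleton_subset_iff.mpr hμ),
          Finset.card_singleton]
        have hpos : 0 < (initialPart u f').support.card := Finset.card_pos.mpr ⟨μ, hμ⟩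
        omega
      have hqJ : q ∈ J := hInq ▸ ih f'' hf''I hf''0 hcard''
      have : initialPart u f' = q + monomial μ c := by rw [hqdef, sub_add_cancel]
      rw [this]
      exact J.add_mem hqJ hmonJ

lemma interior_of_monomial {w : Fin n → ℝ} (hw : ∀ i, 0 < w i)
    (hmono : ∃ S : Set (Fin n →₀ ℕ),
      initialIdeal w I = Ideal.span ((fun a => (monomial a (1 : K))) '' S)) :
    (interior {u : Fin n → ℝ |
        (∀ i, 0 ≤ u i) ∧ initialIdeal u I = initialIdeal w I}).Nonempty := by
  classical
  obtain ⟨S, hS⟩ := hmono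
  -- a finite set of monomial generators
  have hfg : (initialIdeal w I).FG := IsNoetherian.noetherian _
  obtain ⟨T, hT⟩ := hfg
  have hmem : ∀ t ∈ T, ∃ Ut : Finset (MvPolynomial (Fin n) K),
      ↑Ut ⊆ ((fun a => (monomial a (1 : K))) '' S) ∧ t ∈ Ideal.span (Ut : Set _) := by
    intro t ht
    apply Submodule.mem_span_finite_of_mem_span
    show t ∈ Ideal.span ((fun a => (monomial a (1 : K))) '' S)
    rw [← hS, ← hT]
    exact Ideal.subset_span ht
  choose! Ut hUt1 hUt2 using hmem
  set U : Finset (MvPolynomial (Fin n) K) := T.biUnion Ut with hU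
  have hUsub : (U : Set (MvPolynomial (Fin n) K)) ⊆ ((fun a => (monomial a (1 : K))) '' S) := by
    intro x hx
    obtain ⟨t, ht, hxt⟩ := Finset.mem_biUnion.mp hx
    exact hUt1 t ht hxt
  have hJU : initialIdeal w I ≤ Ideal.span (U : Set _) := by
    rw [← hT, Ideal.span_le]
    intro t ht
    exact Ideal.span_mono (Finset.coe_subset.mpr (Finset.subset_biUnion_of_mem Ut ht))
      (hUt2 t ht)
  -- exponents of the generators
  set ex : MvPolynomial (Fin n) K → (Fin n →₀ ℕ) :=
    fun g => if h : ∃ a, g = monomial a (1:K) then h.choose else 0 with hex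
  have hexg : ∀ g ∈ U, g = monomial (ex g) (1:K) := by
    intro g hg
    obtain ⟨a, _, hag⟩ := hUsub hg
    have he : ∃ a, g = monomial a (1:K) := ⟨a, hag.symm⟩
    rw [hex]
    simp only [dif_pos he]
    exact he.choose_spec
  set A : Finset (Fin n →₀ ℕ) := U.image ex with hA
  have hA1 : ∀ a ∈ A, monomial a (1:K) ∈ initialIdeal w I := by
    intro a ha
    obtain ⟨g, hg, hga⟩ := Finset.mem_image.mp ha
    rw [← hga, ← hexg g hg]
    rw [hS]
    exact Ideal.subset_span (hUsub hg)
  have hJA : initialIdeal w I ≤ Ideal.span ((fun a => (monomial a (1 : K))) '' ↑A) := by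
    refine le_trans hJU (Ideal.span_le.mpr ?_)
    intro g hg
    exact Ideal.subset_span ⟨ex g, Finset.mem_coe.mpr (Finset.mem_image_of_mem ex hg),
      (hexg g hg).symm⟩
  have hdiv : ∀ f ∈ I, f ≠ 0 → ∀ μ ∈ (initialPart w f).support, ∃ a ∈ A, a ≤ μ := by
    intro f hfI hf0 μ hμ
    have h1 : initialPart w f ∈ Ideal.span ((fun a => (monomial a (1 : K))) '' ↑A) :=
      hJA (initialPart_mem_initialIdeal hfI hf0)
    obtain ⟨a, haA, hale⟩ := mem_ideal_span_monomial_image.mp h1 μ hμ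
    exact ⟨a, Finset.mem_coe.mp haA, hale⟩
  -- representatives with monomial initial parts
  have hFex : ∀ a ∈ A, ∃ fa : MvPolynomial (Fin n) K,
      fa ∈ I ∧ fa ≠ 0 ∧ initialPart w fa = monomial a 1 := by
    intro a ha
    have h1 : (monomial a (1:K)) ∈ initialIdeal w I := hA1 a ha
    have hiso : proj w (wt w a) (monomial a (1:K)) = monomial a 1 := by
      apply proj_eq_self
      intro μ hμ
      rw [MvPolynomial.support_monomial, if_neg (one_ne_zero (α := K))] at hμ
      rw [Finset.mem_singleton.mp hμ]
    have hne : proj w (wt w a) (monomial a (1:K)) ≠ 0 := by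
      rw [hiso]
      intro h0
      have := congrArg (MvPolynomial.coeff a) h0
      rw [coeff_monomial, if_pos rfl, MvPolynomial.coeff_zero] at this
      exact one_ne_zero this
    rcases proj_initialIdeal h1 (wt w a) with h0 | ⟨fa, hfaI, hfa0, hfa⟩
    · exact absurd h0 hne
    · exact ⟨fa, hfaI, hfa0, by rw [← hiso, hfa]⟩
  choose! F hF1 hF2 hF3 using hFex
  -- radius of stability
  have hrad : ∀ a ∈ A, ∃ r > 0, ∀ u : Fin n → ℝ, dist u w < r →
      initialPart u (F a) = monomial a 1 := by
    intro a ha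
    exact initialPart_stable (hF3 a ha) one_ne_zero
  choose! ra hra1 hra2 using hrad
  obtain ⟨r₁, hr₁, hr₁le⟩ := exists_pos_le A ra hra1
  obtain ⟨r₂, hr₂, hr₂le⟩ := exists_pos_le Finset.univ w (fun i _ => hw i)
  set r := min r₁ r₂ with hr
  have hrpos : 0 < r := lt_min hr₁ hr₂
  have hupos : ∀ u : Fin n → ℝ, dist u w < r → ∀ i, 0 < u i := by
    intro u hd i
    have h1 : dist (u i) (w i) ≤ dist u w := dist_le_pi_dist u w i
    rw [Real.dist_eq] at h1
    have h2 := abs_lt.mp (lt_of_le_of_lt h1 (lt_of_lt_of_le hd (min_le_right _ _)))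
    have h3 := hr₂le i (Finset.mem_univ i)
    linarith [h2.1]
  have hFu : ∀ u : Fin n → ℝ, dist u w < r → ∀ a ∈ A,
      initialPart u (F a) = monomial a 1 := by
    intro u hd a ha
    exact hra2 a ha u (lt_of_lt_of_le hd (le_trans (min_le_left _ _) (hr₁le a ha)))
  have hIJ : ∀ u : Fin n → ℝ, dist u w < r → initialIdeal u I = initialIdeal w I := by
    intro u hd
    apply le_antisymm
    · rw [initialIdeal, Ideal.span_le]
      rintro x ⟨f, hfI, hf0, rfl⟩
      exact initialPart_mem_span (hupos u hd) hw hF1 (hFu u hd) hF3 hdiv hA1 hfI hf0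
    · refine le_trans hJA (Ideal.span_le.mpr ?_)
      rintro x ⟨a, haA, rfl⟩
      show (monomial a (1:K)) ∈ (initialIdeal u I : Set (MvPolynomial (Fin n) K))
      rw [← hFu u hd a (Finset.mem_coe.mp haA)]
      exact initialPart_mem_initialIdeal (hF1 a (Finset.mem_coe.mp haA))
        (hF2 a (Finset.mem_coe.mp haA))
  refine ⟨w, ?_⟩
  rw [mem_interior]
  refine ⟨Metric.ball w r, ?_, Metric.isOpen_ball, Metric.mem_ball_self hrpos⟩
  intro u hu
  have hd : dist u w < r := Metric.mem_ball.mp hu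
  exact ⟨fun i => (hupos u hd i).le, hIJ u hd⟩

end Aux

/-- For a strictly positive `ω`, the initial ideal `In_ω I` is a monomial
ideal (generated by a set of monomials) if and only if the Gröbner cone `C_ω(I)` has
maximal dimension `n`, i.e. the set `{u ∈ (ℝ_{≥0})^n : In_u I = In_ω I}` has nonempty
interior in `ℝ^n`. -/
theorem initialIdeal_monomial_iff_maximal_dimension {n : ℕ} {K : Type*} [Field K]
    (I : Ideal (MvPolynomial (Fin n) K)) (w : Fin n → ℝ) (hw : ∀ i, 0 < w i) :
    (∃ S : Set (Fin n →₀ ℕ),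
        initialIdeal w I = Ideal.span ((fun a => (monomial a (1 : K))) '' S)) ↔
      (interior {u : Fin n → ℝ |
        (∀ i, 0 ≤ u i) ∧ initialIdeal u I = initialIdeal w I}).Nonempty :=
  ⟨fun h => interior_of_monomial hw h, fun h => monomial_of_interior h⟩
end

section
/- Let K be a field and M an n×n unimodular matrix with nonnegative integer entries and columns m^{(1)},…,m^{(n)}. Let g_1,…,g_r ∈ K[x_1,…,x_n] be nonzero polynomials such that, for each i, In_u g_i is the same polynomial for all u = Mλ with λ ∈ (ℝ_{>0})^n, and write g_i∘φ_{M^t} = x^{P_i}·h_i with P_i ∈ ℕ^n and h_i(0) ≠ 0. Fix s ∈ {1,…,n} and a vector w = λ_1 m^{(1)} + ⋯ + λ_s m^{(s)} with all λ_i > 0. If y = (0,…,0,y_{s+1},…,y_n) ∈ K^n with y_j ≠ 0 for j > s satisfies h_i(y) = 0 for all i, then the point z = φ_{M^t}(1,…,1,y_{s+1},…,y_n) lies in (K^*)^n and satisfies (In_w g_i)(z) = 0 for all i; in particular the ideal ⟨In_w g_1,…,In_w g_r⟩ has a common zero in the torus (K^*)^n. -/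
open MvPolynomial Matrix

/-- The monomial substitution `φ_M` on polynomials: `x_i ↦ ∏_j x_j ^ (M j i)`,
so that `x^μ ↦ x^(Mμ)`. -/
noncomputable def monomialSubst {n : ℕ} {K : Type*} [CommSemiring K]
    (M : Matrix (Fin n) (Fin n) ℕ) (f : MvPolynomial (Fin n) K) : MvPolynomial (Fin n) K :=
  aeval (fun i => ∏ j, (X j : MvPolynomial (Fin n) K) ^ M j i) f

/-- A nonnegative integer square matrix is unimodular if its determinant (over `ℤ`) is `±1`. -/
def IsUnimodular {n : ℕ} (M : Matrix (Fin n) (Fin n) ℕ) : Prop :=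
  (M.map fun a => (a : ℤ)).det = 1 ∨ (M.map fun a => (a : ℤ)).det = -1

noncomputable def Tmap {n : ℕ} (M : Matrix (Fin n) (Fin n) ℕ) (μ : Fin n →₀ ℕ) : Fin n →₀ ℕ :=
  Finsupp.equivFunOnFinite.symm fun j => ∑ i, M i j * μ i

lemma Tmap_apply {n : ℕ} (M : Matrix (Fin n) (Fin n) ℕ) (μ : Fin n →₀ ℕ) (j : Fin n) :
    Tmap M μ j = ∑ i, M i j * μ i := rfl

lemma prod_pow_Tmap {n : ℕ} {K : Type*} [CommSemiring K]
    (M : Matrix (Fin n) (Fin n) ℕ) (yt : Fin n → K) (μ : Fin n →₀ ℕ) :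
    ∏ i, (∏ j, yt j ^ M i j) ^ μ i = ∏ j, yt j ^ (Tmap M μ j) := by
  simp only [← Finset.prod_pow, ← pow_mul]
  rw [Finset.prod_comm]
  simp only [Finset.prod_pow_eq_pow_sum, Tmap_apply]

lemma monomialSubst_monomial {n : ℕ} {K : Type*} [CommSemiring K]
    (M : Matrix (Fin n) (Fin n) ℕ) (μ : Fin n →₀ ℕ) (a : K) :
    monomialSubst Mᵀ (monomial μ a) = monomial (Tmap M μ) a := by
  rw [monomialSubst, aeval_monomial, monomial_eq]
  rw [Finsupp.prod_fintype _ _ fun i => pow_zero _,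
    Finsupp.prod_fintype _ _ fun i => pow_zero _]
  rw [algebraMap_eq]
  congr 1
  simp only [Matrix.transpose_apply]
  exact prod_pow_Tmap M (fun j => (X j : MvPolynomial (Fin n) K)) μ

lemma monomialSubst_eq_sum {n : ℕ} {K : Type*} [CommSemiring K]
    (M : Matrix (Fin n) (Fin n) ℕ) (f : MvPolynomial (Fin n) K) :
    monomialSubst Mᵀ f = ∑ μ ∈ f.support, monomial (Tmap M μ) (f.coeff μ) := by
  conv_lhs => rw [f.as_sum]
  rw [monomialSubst, map_sum]
  exact Finset.sum_congr rfl fun μ _ => monomialSubst_monomial M μ _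

lemma Tmap_injective {n : ℕ} {M : Matrix (Fin n) (Fin n) ℕ} (hM : IsUnimodular M) :
    Function.Injective (Tmap M) := by
  intro μ ν hμν
  have hA : IsUnit ((M.map fun a => (a : ℤ))ᵀ.det) := by
    rw [Matrix.det_transpose]
    rcases hM with hd | hd <;> simp [hd]
  set A := (M.map fun a => (a : ℤ))ᵀ with hAdef
  have key : A.mulVec (fun i => (μ i : ℤ)) = A.mulVec (fun i => (ν i : ℤ)) := by
    funext j
    have hj : (Tmap M μ) j = (Tmap M ν) j := by rw [hμν]
    rw [Tmap_apply, Tmap_apply] at hj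
    simp only [hAdef, Matrix.mulVec, dotProduct, Matrix.transpose_apply, Matrix.map_apply]
    exact_mod_cast hj
  have h2 : (fun i => (μ i : ℤ)) = fun i => (ν i : ℤ) := by
    have h1 := congrArg (fun v => A⁻¹.mulVec v) key
    simpa [Matrix.mulVec_mulVec, Matrix.nonsing_inv_mul _ hA] using h1
  ext i
  exact_mod_cast congrFun h2 i

lemma coeff_monomialSubst {n : ℕ} {K : Type*} [CommSemiring K]
    {M : Matrix (Fin n) (Fin n) ℕ} (hM : IsUnimodular M)
    (f : MvPolynomial (Fin n) K) (μ : Fin n →₀ ℕ) :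
    (monomialSubst Mᵀ f).coeff (Tmap M μ) = f.coeff μ := by
  classical
  rw [monomialSubst_eq_sum, coeff_sum]
  simp only [coeff_monomial, (Tmap_injective hM).eq_iff]
  rw [Finset.sum_ite_eq' f.support μ fun μ' => f.coeff μ']
  by_cases hμ : μ ∈ f.support
  · simp [hμ]
  · simp [hμ, MvPolynomial.notMem_support_iff.1 hμ]

lemma support_monomialSubst {n : ℕ} {K : Type*} [CommSemiring K]
    {M : Matrix (Fin n) (Fin n) ℕ} (hM : IsUnimodular M)
    (f : MvPolynomial (Fin n) K) :
    (monomialSubst Mᵀ f).support = f.support.image (Tmap M) := by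
  classical
  ext ν
  simp only [MvPolynomial.mem_support_iff, Finset.mem_image]
  constructor
  · intro hν
    by_contra hc
    push_neg at hc
    apply hν
    rw [monomialSubst_eq_sum, coeff_sum]
    refine Finset.sum_eq_zero fun μ hμ => ?_
    rw [coeff_monomial, if_neg]
    intro hEq
    exact (hc μ (MvPolynomial.mem_support_iff.1 hμ) hEq).elim
  · rintro ⟨μ, hμ, rfl⟩
    rw [coeff_monomialSubst hM]
    exact hμ

lemma support_monomial_one_mul {n : ℕ} {K : Type*} [CommSemiring K]
    (p : Fin n →₀ ℕ) (q : MvPolynomial (Fin n) K) :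
    ((monomial p (1 : K)) * q).support = q.support.image (fun τ => p + τ) := by
  classical
  ext ν
  simp only [MvPolynomial.mem_support_iff, Finset.mem_image]
  constructor
  · intro hν
    rw [coeff_monomial_mul'] at hν
    by_cases hle : p ≤ ν
    · refine ⟨ν - p, ?_, ?_⟩
      · rw [if_pos hle, one_mul] at hν
        exact MvPolynomial.mem_support_iff.1 (MvPolynomial.mem_support_iff.2 hν)
      · exact add_tsub_cancel_of_le hle
    · rw [if_neg hle] at hν
      exact (hν rfl).elim
  · rintro ⟨τ, hτ, rfl⟩
    rw [coeff_monomial_mul, one_mul]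
    exact hτ


lemma main_aux {n : ℕ} {K : Type*} [Field K]
    (M : Matrix (Fin n) (Fin n) ℕ) (hM : IsUnimodular M)
    (f : MvPolynomial (Fin n) K)
    (p : Fin n →₀ ℕ) (q : MvPolynomial (Fin n) K)
    (hfac : monomialSubst Mᵀ f = monomial p 1 * q)
    (hh0 : q.coeff 0 ≠ 0)
    (s : ℕ)
    (lam : Fin n → ℝ) (hlam : ∀ i : Fin n, ((i : ℕ) < s → 0 < lam i) ∧ (s ≤ (i : ℕ) → lam i = 0))
    (yt y : Fin n → K)
    (hyts : ∀ j : Fin n, (j : ℕ) < s → yt j = 1)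
    (hytg : ∀ j : Fin n, s ≤ (j : ℕ) → yt j = y j)
    (hy0 : ∀ j : Fin n, (j : ℕ) < s → y j = 0)
    (hyq : eval y q = 0) :
    eval (fun i' : Fin n => ∏ j : Fin n, yt j ^ M i' j)
      (initialPart ((M.map ((↑) : ℕ → ℝ)).mulVec lam) f) = 0 := by
  classical
  set w : Fin n → ℝ := (M.map ((↑) : ℕ → ℝ)).mulVec lam with hw
  have hlamnn : ∀ j : Fin n, 0 ≤ lam j := fun j => by
    rcases lt_or_ge (j : ℕ) s with hj | hj
    · exact ((hlam j).1 hj).le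
    · rw [(hlam j).2 hj]
  have wsum : ∀ μ : Fin n →₀ ℕ, ∑ i', w i' * (μ i' : ℝ) = ∑ j, lam j * (Tmap M μ j : ℝ) := by
    intro μ
    calc ∑ i', w i' * (μ i' : ℝ)
        = ∑ i', ∑ j, (M i' j : ℝ) * lam j * (μ i' : ℝ) := by
          refine Finset.sum_congr rfl fun i' _ => ?_
          rw [hw]
          simp [Matrix.mulVec, dotProduct, Finset.sum_mul]
      _ = ∑ j, ∑ i', (M i' j : ℝ) * lam j * (μ i' : ℝ) := Finset.sum_comm
      _ = ∑ j, lam j * (Tmap M μ j : ℝ) := by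
          refine Finset.sum_congr rfl fun j _ => ?_
          rw [Tmap_apply]
          push_cast
          rw [Finset.mul_sum]
          exact Finset.sum_congr rfl fun i' _ => by ring
  have hPsupp : ∀ ν ∈ (monomialSubst Mᵀ f).support, p ≤ ν := by
    intro ν hν
    rw [MvPolynomial.mem_support_iff, hfac, coeff_monomial_mul'] at hν
    by_cases hle : p ≤ ν
    · exact hle
    · rw [if_neg hle] at hν; exact (hν rfl).elim
  have hTle : ∀ μ ∈ f.support, p ≤ Tmap M μ := by
    intro μ hμ
    refine hPsupp _ ?_
    rw [support_monomialSubst hM]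
    exact Finset.mem_image_of_mem _ hμ
  have hge : ∀ ν : Fin n →₀ ℕ, p ≤ ν →
      ∑ j, lam j * (p j : ℝ) ≤ ∑ j, lam j * (ν j : ℝ) := by
    intro ν hν
    refine Finset.sum_le_sum fun j _ => ?_
    have hc : (p j : ℝ) ≤ (ν j : ℝ) := by exact_mod_cast hν j
    exact mul_le_mul_of_nonneg_left hc (hlamnn j)
  have heq_iff : ∀ ν : Fin n →₀ ℕ, p ≤ ν →
      ((∑ j, lam j * (ν j : ℝ)) = ∑ j, lam j * (p j : ℝ) ↔
        ∀ j : Fin n, (j : ℕ) < s → ν j = p j) := by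
    intro ν hν
    constructor
    · intro hEq
      by_contra hc
      push_neg at hc
      obtain ⟨j0, hj0s, hj0⟩ := hc
      have hlt : ∑ j, lam j * (p j : ℝ) < ∑ j, lam j * (ν j : ℝ) := by
        refine Finset.sum_lt_sum (fun j _ => ?_) ⟨j0, Finset.mem_univ _, ?_⟩
        · have hc : (p j : ℝ) ≤ (ν j : ℝ) := by exact_mod_cast hν j
          exact mul_le_mul_of_nonneg_left hc (hlamnn j)
        · have hplt : (p j0 : ℝ) < (ν j0 : ℝ) := by
            exact_mod_cast lt_of_le_of_ne (hν j0) (Ne.symm hj0)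
          exact mul_lt_mul_of_pos_left hplt ((hlam j0).1 hj0s)
      linarith [hEq]
    · intro hQ
      refine Finset.sum_congr rfl fun j _ => ?_
      rcases lt_or_ge (j : ℕ) s with hj | hj
      · rw [hQ j hj]
      · rw [(hlam j).2 hj, zero_mul, zero_mul]
  have hp0 : p ∈ (monomialSubst Mᵀ f).support := by
    rw [MvPolynomial.mem_support_iff, hfac]
    have h1 : coeff (p + 0) ((monomial p) (1 : K) * q) = 1 * q.coeff 0 :=
      coeff_monomial_mul 0 p 1 q
    rw [add_zero, one_mul] at h1
    rw [h1]; exact hh0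
  obtain ⟨μ₀, hμ₀s, hμ₀⟩ : ∃ μ₀ ∈ f.support, Tmap M μ₀ = p := by
    rw [support_monomialSubst hM, Finset.mem_image] at hp0
    exact hp0
  have condQ : ∀ μ ∈ f.support,
      ((∀ ν ∈ f.support, ∑ i', w i' * (μ i' : ℝ) ≤ ∑ i', w i' * (ν i' : ℝ)) ↔
        ∀ j : Fin n, (j : ℕ) < s → Tmap M μ j = p j) := by
    intro μ hμ
    constructor
    · intro hcond
      have h1 := hcond μ₀ hμ₀s
      rw [wsum, wsum, hμ₀] at h1
      exact (heq_iff _ (hTle μ hμ)).1 (le_antisymm h1 (hge _ (hTle μ hμ)))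
    · intro hQ ν hν
      rw [wsum, wsum]
      calc ∑ j, lam j * (Tmap M μ j : ℝ)
          = ∑ j, lam j * (p j : ℝ) := (heq_iff _ (hTle μ hμ)).2 hQ
        _ ≤ ∑ j, lam j * (Tmap M ν j : ℝ) := hge _ (hTle ν hν)
  have step1 : eval (fun i' : Fin n => ∏ j : Fin n, yt j ^ M i' j) (initialPart w f)
      = ∑ μ ∈ f.support,
          if (∀ j : Fin n, (j : ℕ) < s → Tmap M μ j = p j)
          then f.coeff μ * ∏ j, yt j ^ Tmap M μ j else 0 := by
    rw [initialPart, map_sum]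
    refine Finset.sum_congr rfl fun μ hμ => ?_
    rw [apply_ite (eval fun i' : Fin n => ∏ j : Fin n, yt j ^ M i' j), map_zero]
    have hval : eval (fun i' : Fin n => ∏ j : Fin n, yt j ^ M i' j) (monomial μ (f.coeff μ))
        = f.coeff μ * ∏ j, yt j ^ Tmap M μ j := by
      rw [eval_monomial, Finsupp.prod_fintype _ _ fun i' => pow_zero _]
      rw [prod_pow_Tmap M yt μ]
    rw [hval]
    exact if_congr (condQ μ hμ) rfl rfl
  have step2 : (∑ μ ∈ f.support,
        if (∀ j : Fin n, (j : ℕ) < s → Tmap M μ j = p j)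
        then f.coeff μ * ∏ j, yt j ^ Tmap M μ j else 0)
      = ∑ ν ∈ (monomialSubst Mᵀ f).support,
          if (∀ j : Fin n, (j : ℕ) < s → ν j = p j)
          then (monomialSubst Mᵀ f).coeff ν * ∏ j, yt j ^ ν j else 0 := by
    rw [support_monomialSubst hM,
      Finset.sum_image fun a _ b _ hab => Tmap_injective hM hab]
    refine Finset.sum_congr rfl fun μ hμ => ?_
    rw [coeff_monomialSubst hM]
  have step3 : (∑ ν ∈ (monomialSubst Mᵀ f).support,
        if (∀ j : Fin n, (j : ℕ) < s → ν j = p j)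
        then (monomialSubst Mᵀ f).coeff ν * ∏ j, yt j ^ ν j else 0)
      = ∑ τ ∈ q.support,
          if (∀ j : Fin n, (j : ℕ) < s → τ j = 0)
          then q.coeff τ * ((∏ j, yt j ^ p j) * ∏ j, yt j ^ τ j) else 0 := by
    rw [hfac, support_monomial_one_mul,
      Finset.sum_image fun a _ b _ hab => add_left_cancel hab]
    refine Finset.sum_congr rfl fun τ hτ => ?_
    have hcond : (∀ j : Fin n, (j : ℕ) < s → (p + τ) j = p j) ↔
        (∀ j : Fin n, (j : ℕ) < s → τ j = 0) := by
      constructor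
      · intro hQ j hj
        have := hQ j hj
        rw [Finsupp.add_apply] at this
        exact (add_eq_left).1 this
      · intro hQ j hj
        rw [Finsupp.add_apply, hQ j hj, add_zero]
    have hcoeff : coeff (p + τ) ((monomial p) (1 : K) * q) = q.coeff τ := by
      rw [coeff_monomial_mul, one_mul]
    have hprod : ∏ j, yt j ^ ((p + τ) j) = (∏ j, yt j ^ p j) * ∏ j, yt j ^ τ j := by
      rw [← Finset.prod_mul_distrib]
      exact Finset.prod_congr rfl fun j _ => by rw [Finsupp.add_apply, pow_add]
    rw [hcoeff, hprod]
    exact if_congr hcond rfl rfl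
  have step4 : (∑ τ ∈ q.support,
        if (∀ j : Fin n, (j : ℕ) < s → τ j = 0)
        then q.coeff τ * ((∏ j, yt j ^ p j) * ∏ j, yt j ^ τ j) else 0)
      = (∏ j, yt j ^ p j) * eval y q := by
    rw [eval_eq', Finset.mul_sum]
    refine Finset.sum_congr rfl fun τ hτ => ?_
    by_cases hQ : ∀ j : Fin n, (j : ℕ) < s → τ j = 0
    · rw [if_pos hQ]
      have hyy : ∏ j, yt j ^ τ j = ∏ j, y j ^ τ j := by
        refine Finset.prod_congr rfl fun j _ => ?_
        rcases lt_or_ge (j : ℕ) s with hj | hj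
        · rw [hQ j hj, pow_zero, pow_zero]
        · rw [hytg j hj]
      rw [hyy]; ring
    · rw [if_neg hQ]
      push_neg at hQ
      obtain ⟨j0, hj0s, hj0⟩ := hQ
      have : ∏ j, y j ^ τ j = 0 := by
        refine Finset.prod_eq_zero (Finset.mem_univ j0) ?_
        rw [hy0 j0 hj0s]
        exact zero_pow hj0
      rw [this]; ring
  rw [step1, step2, step3, step4, hyq, mul_zero]

/-- Let `M` be a nonnegative unimodular matrix whose column cone is good for
each of the nonzero polynomials `g_1, …, g_r`, and write `g_i ∘ φ_{Mᵀ} = x^{P_i} · h_i`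
with `h_i(0) ≠ 0`.  Let `w = λ_1 m^{(1)} + ⋯ + λ_s m^{(s)}` be a positive combination of
the first `s` columns of `M`.  If `y = (0,…,0,y_{s+1},…,y_n)` (with `y_j ≠ 0` for `j > s`)
is a common zero of the `h_i`, then the point `z = φ_{Mᵀ}(1,…,1,y_{s+1},…,y_n)` lies in
the torus `(K^*)^n` and is a common zero of the initial parts `In_w g_i`. -/
theorem orbit_point_gives_torus_zero_of_initials {n r : ℕ} {K : Type*} [Field K]
    (M : Matrix (Fin n) (Fin n) ℕ) (hM : IsUnimodular M)
    (g : Fin r → MvPolynomial (Fin n) K) (hg : ∀ i, g i ≠ 0)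
    (hgood : ∀ i, ∀ lam lam' : Fin n → ℝ, (∀ j, 0 < lam j) → (∀ j, 0 < lam' j) →
      initialPart ((M.map ((↑) : ℕ → ℝ)).mulVec lam) (g i) =
        initialPart ((M.map ((↑) : ℕ → ℝ)).mulVec lam') (g i))
    (P : Fin r → (Fin n →₀ ℕ)) (h : Fin r → MvPolynomial (Fin n) K)
    (hfac : ∀ i, monomialSubst Mᵀ (g i) = monomial (P i) 1 * h i)
    (hh0 : ∀ i, eval (0 : Fin n → K) (h i) ≠ 0)
    (s : ℕ) (hs1 : 1 ≤ s) (hsn : s ≤ n)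
    (lam : Fin n → ℝ) (hlam : ∀ i : Fin n, ((i : ℕ) < s → 0 < lam i) ∧ (s ≤ (i : ℕ) → lam i = 0))
    (y : Fin n → K)
    (hy0 : ∀ j : Fin n, (j : ℕ) < s → y j = 0)
    (hy1 : ∀ j : Fin n, s ≤ (j : ℕ) → y j ≠ 0)
    (hyz : ∀ i, eval y (h i) = 0) :
    (∀ i : Fin n, (∏ j : Fin n, (if (j : ℕ) < s then 1 else y j) ^ M i j) ≠ 0) ∧
      ∀ i : Fin r,
        eval (fun i' : Fin n => ∏ j : Fin n, (if (j : ℕ) < s then 1 else y j) ^ M i' j)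
          (initialPart ((M.map ((↑) : ℕ → ℝ)).mulVec lam) (g i)) = 0 := by
  classical
  have hytne : ∀ j : Fin n, (if (j : ℕ) < s then (1 : K) else y j) ≠ 0 := by
    intro j
    by_cases hj : (j : ℕ) < s
    · simp [hj]
    · simpa [hj] using hy1 j (le_of_not_gt hj)
  constructor
  · intro i
    exact Finset.prod_ne_zero_iff.2 fun j _ => pow_ne_zero _ (hytne j)
  intro i
  have hq0 : (h i).coeff 0 ≠ 0 := by
    have hc := hh0 i
    rwa [eval_zero, constantCoeff_eq] at hc
  exact main_aux M hM (g i) (P i) (h i) (hfac i) hq0 s lam hlam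
    (fun j => if (j : ℕ) < s then 1 else y j) y
    (fun j hj => if_pos hj)
    (fun j hj => if_neg (Nat.not_lt.2 hj))
    hy0 (hyz i)
end
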